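/- arXiv:0706.3425 — 7 statements merged into one kernel-verified Lean document; each statement's English description precedes it below -/
import Mathlib

section
/- Given a commutative diagram with exact rows 1 → A → B → C → 1 and compatible endomorphisms φ', φ, φ̄, if R(φ̄) < ∞, the fixed subgroup Fix(φ̄) is finite, and R(φ') = ∞, then R(φ) = ∞. -/
/-- Two elements are `φ`-twisted conjugate if `b = σ * a * (φ σ)⁻¹` for some `σ`. -/
def twistedConj {G : Type*} [Group G] (φ : G →* G) (a b : G) : Prop :=
  ∃ σ : G, b = σ * a * (φ σ)⁻¹

lemma twistedConj_equivalence {G : Type*} [Group G] (φ : G →* G) :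
    Equivalence (twistedConj φ) := by
  constructor
  · intro a; exact ⟨1, by simp⟩
  · rintro a b ⟨σ, rfl⟩
    refine ⟨σ⁻¹, ?_⟩
    simp [mul_assoc]
  · rintro a b c ⟨σ, rfl⟩ ⟨τ, rfl⟩
    refine ⟨τ * σ, ?_⟩
    simp [mul_assoc]

lemma twistedConj_quot_eq {G : Type*} [Group G] (φ : G →* G) (a b : G)
    (h : Quot.mk (twistedConj φ) a = Quot.mk (twistedConj φ) b) :
    twistedConj φ a b := by
  rw [Quot.eq] at h
  exact ((twistedConj_equivalence φ).eqvGen_iff).mp h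

/-- For a commutative diagram of endomorphisms of a short exact sequence
`1 → A → B → C → 1`, if `R(φ̄) < ∞`, `Fix(φ̄)` is finite, and `R(φ') = ∞`,
then `R(φ) = ∞`. -/
theorem stmt3 {A B C : Type*} [Group A] [Group B] [Group C]
    (i : A →* B) (p : B →* C) (hi : Function.Injective i) (hp : Function.Surjective p)
    (hexact : i.range = p.ker)
    (φ' : A →* A) (φ : B →* B) (φbar : C →* C)
    (hcomm1 : φ.comp i = i.comp φ') (hcomm2 : φbar.comp p = p.comp φ)
    (hR : Finite (Quot (twistedConj φbar)))
    (hFix : Set.Finite {c : C | φbar c = c})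
    (hR' : Infinite (Quot (twistedConj φ'))) :
    Infinite (Quot (twistedConj φ)) := by
  by_contra hinf
  rw [not_infinite_iff_finite] at hinf
  have hc1 : ∀ a : A, φ (i a) = i (φ' a) := fun a => DFunLike.congr_fun hcomm1 a
  have hc2 : ∀ b : B, φbar (p b) = p (φ b) := fun b => DFunLike.congr_fun hcomm2 b
  have hFwd : ∀ a a', twistedConj φ' a a' → twistedConj φ (i a) (i a') := by
    rintro a a' ⟨σ, rfl⟩
    exact ⟨i σ, by simp [hc1]⟩
  let F : Quot (twistedConj φ') → Quot (twistedConj φ) :=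
    Quot.lift (fun a => Quot.mk (twistedConj φ) (i a))
      (fun a a' h => Quot.sound (hFwd a a' h))
  have hpi : ∀ a : A, p (i a) = 1 := by
    intro a
    have : i a ∈ p.ker := by rw [← hexact]; exact ⟨a, rfl⟩
    exact this
  suffices hfin : Finite (Quot (twistedConj φ')) by
    exact absurd hR' (by rw [not_infinite_iff_finite]; exact hfin)
  rw [← Set.finite_univ_iff]
  have huniv : (Set.univ : Set (Quot (twistedConj φ'))) =
      ⋃ q : Quot (twistedConj φ), F ⁻¹' {q} := by
    ext x; simp
  rw [huniv]
  apply Set.finite_iUnion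
  intro q
  rcases Set.eq_empty_or_nonempty (F ⁻¹' {q}) with he | ⟨x0, hx0⟩
  · rw [he]; exact Set.finite_empty
  obtain ⟨a0, rfl⟩ := Quot.exists_rep x0
  haveI : Finite {c : C // φbar c = c} := hFix.to_subtype
  have hmem : ∀ c : C, φbar c = c → ∀ θ : B, p θ = c →
      (θ * i a0 * (φ θ)⁻¹) ∈ i.range := by
    intro c hcfix θ hθ
    rw [hexact]
    show p (θ * i a0 * (φ θ)⁻¹) = 1
    rw [map_mul, map_mul, map_inv, hpi, ← hc2, hθ, hcfix, mul_one, mul_inv_cancel]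
  let Φ : {c : C // φbar c = c} → Quot (twistedConj φ') := fun c =>
    Quot.mk _ ((hmem c.1 c.2 (hp c.1).choose (hp c.1).choose_spec).choose)
  apply Set.Finite.subset (Set.finite_range Φ)
  rintro x hx
  obtain ⟨a', rfl⟩ := Quot.exists_rep x
  have hq : F (Quot.mk _ a') = F (Quot.mk _ a0) := by
    rw [hx0.out]; exact hx.out
  have htc : twistedConj φ (i a0) (i a') :=
    ((twistedConj_equivalence φ).symm (twistedConj_quot_eq φ _ _ hq))
  obtain ⟨σ, hσ⟩ := htc
  set c := p σ with hcdef
  have hcfix : φbar c = c := by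
    have h1 : p (i a') = p (σ * i a0 * (φ σ)⁻¹) := by rw [hσ]
    rw [hpi, map_mul, map_mul, map_inv, hpi, mul_one, ← hc2] at h1
    have := h1.symm
    rw [mul_inv_eq_one] at this
    exact this.symm
  set θ := (hp c).choose with hθdef
  have hθ : p θ = c := (hp c).choose_spec
  set aθ := (hmem c hcfix θ hθ).choose with haθdef
  have haθ : i aθ = θ * i a0 * (φ θ)⁻¹ := (hmem c hcfix θ hθ).choose_spec
  have hker : σ * θ⁻¹ ∈ i.range := by
    rw [hexact]
    show p (σ * θ⁻¹) = 1
    rw [map_mul, map_inv, hθ, mul_inv_cancel]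
  obtain ⟨α, hα⟩ := hker
  refine ⟨⟨c, hcfix⟩, ?_⟩
  show Quot.mk _ aθ = Quot.mk _ a'
  apply Quot.sound
  refine ⟨α, hi ?_⟩
  rw [map_mul, map_mul, map_inv, ← hc1, hα, haθ, hσ]
  simp only [map_mul, map_inv]
  group
end

section
/- Every endomorphism κ of the Klein bottle group π = ⟨α, β | αβαβ^{-1}⟩ satisfies κ(α) = α^ε for some integer ε; that is, the image of α under any endomorphism is a power of α. -/
/-- The single relator of the Klein bottle group. -/
def kleinRels : Set (FreeGroup (Fin 2)) :=
  {FreeGroup.of 0 * FreeGroup.of 1 * FreeGroup.of 0 * (FreeGroup.of 1)⁻¹}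

/-- The Klein bottle group `⟨a, b | a b a b⁻¹⟩`. -/
abbrev KleinGroup := PresentedGroup kleinRels

/-- The generator `a` (also called `x` or `α`). -/
def ka : KleinGroup := PresentedGroup.of 0

/-- The generator `b` (also called `y` or `β`). -/
def kb : KleinGroup := PresentedGroup.of 1

lemma klein_rel : ka * kb * ka * kb⁻¹ = 1 := by
  have h : (PresentedGroup.mk kleinRels)
      (FreeGroup.of 0 * FreeGroup.of 1 * FreeGroup.of 0 * (FreeGroup.of 1)⁻¹) = 1 :=
    (QuotientGroup.eq_one_iff _).mpr (Subgroup.subset_normalClosure rfl)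
  simpa [ka, kb, PresentedGroup.of, map_mul, map_inv] using h

lemma klein_conj : kb * ka * kb⁻¹ = ka⁻¹ := by
  have h := klein_rel
  group
  rw [← mul_left_cancel_iff (a := ka)]
  group at h ⊢
  exact h

lemma klein_conj' : kb⁻¹ * ka * kb = ka⁻¹ := by
  have h2 : kb * ka⁻¹ * kb⁻¹ = ka := by
    have := congrArg Inv.inv klein_conj
    simpa [mul_assoc] using this
  apply mul_left_cancel (a := kb)
  apply mul_right_cancel (b := kb⁻¹)
  rw [show kb * (kb⁻¹ * ka * kb) * kb⁻¹ = ka by group, h2]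

/-- `(-1)^k` for an integer exponent, valued in `ℤ`. -/
def neg1 (k : ℤ) : ℤ := ((-1 : ℤˣ) ^ k : ℤˣ)

lemma neg1_succ (k : ℤ) : neg1 (k + 1) = -neg1 k := by
  simp [neg1, zpow_add_one]

lemma neg1_pred (k : ℤ) : neg1 (k - 1) = -neg1 k := by
  simp [neg1, zpow_sub_one, Int.units_inv_eq_self]

/-- auxiliary: exponent-of-b homomorphism -/
def kphi : KleinGroup →* Multiplicative ℤ :=
  PresentedGroup.toGroup (f := fun i : Fin 2 => if i = 0 then 1 else Multiplicative.ofAdd 1)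
    (by
      intro r hr
      rw [Set.mem_singleton_iff.mp hr]
      simp)

lemma kphi_ka : kphi ka = 1 := by
  simpa [ka, kphi] using PresentedGroup.toGroup.of (f := fun i : Fin 2 =>
    if i = 0 then 1 else Multiplicative.ofAdd 1) _ (x := (0 : Fin 2))

lemma kphi_kb : kphi kb = Multiplicative.ofAdd 1 := by
  simpa [kb, kphi] using PresentedGroup.toGroup.of (f := fun i : Fin 2 =>
    if i = 0 then 1 else Multiplicative.ofAdd 1) _ (x := (1 : Fin 2))

lemma klein_conj_pow (k : ℤ) : kb ^ k * ka * (kb ^ k)⁻¹ = ka ^ neg1 k := by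
  induction k using Int.induction_on with
  | zero => simp [neg1]
  | succ n ih =>
      have h1 : kb ^ ((n : ℤ) + 1) * ka * (kb ^ ((n : ℤ) + 1))⁻¹
          = kb ^ (n : ℤ) * (kb * ka * kb⁻¹) * (kb ^ (n : ℤ))⁻¹ := by
        rw [zpow_add_one]; group
      rw [h1, klein_conj]
      have h2 : kb ^ (n : ℤ) * ka⁻¹ * (kb ^ (n : ℤ))⁻¹ = (ka ^ neg1 (n : ℤ))⁻¹ := by
        rw [← ih]; group
      rw [h2, neg1_succ, zpow_neg]
  | pred n ih =>
      have h1 : kb ^ (-(n : ℤ) - 1) * ka * (kb ^ (-(n : ℤ) - 1))⁻¹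
          = kb ^ (-(n : ℤ)) * (kb⁻¹ * ka * kb) * (kb ^ (-(n : ℤ)))⁻¹ := by
        rw [zpow_sub_one]; group
      rw [h1, klein_conj']
      have h2 : kb ^ (-(n : ℤ)) * ka⁻¹ * (kb ^ (-(n : ℤ)))⁻¹ = (ka ^ neg1 (-(n : ℤ)))⁻¹ := by
        rw [← ih]; group
      rw [h2, neg1_pred, zpow_neg]

lemma klein_comm (k m : ℤ) : kb ^ k * ka ^ m = ka ^ (neg1 k * m) * kb ^ k := by
  have h : kb ^ k * ka ^ m * (kb ^ k)⁻¹ = ka ^ (neg1 k * m) := by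
    rw [← conj_zpow, klein_conj_pow, ← zpow_mul]
  rw [← h]; group

lemma klein_nf (g : KleinGroup) : ∃ m k : ℤ, g = ka ^ m * kb ^ k := by
  have htop : g ∈ Subgroup.closure (Set.range (PresentedGroup.of (rels := kleinRels))) := by
    rw [PresentedGroup.closure_range_of]; trivial
  induction htop using Subgroup.closure_induction with
  | mem x hx =>
      obtain ⟨i, rfl⟩ := hx
      fin_cases i
      · exact ⟨1, 0, by simp [ka]⟩
      · exact ⟨0, 1, by simp [kb]⟩
  | one => exact ⟨0, 0, by simp⟩
  | mul x y _ _ hx hy =>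
      obtain ⟨m, k, rfl⟩ := hx
      obtain ⟨n, l, rfl⟩ := hy
      refine ⟨m + neg1 k * n, k + l, ?_⟩
      rw [zpow_add ka, zpow_add kb]
      rw [mul_assoc (ka ^ m), ← mul_assoc (kb ^ k) (ka ^ n), klein_comm]
      group
  | inv x _ hx =>
      obtain ⟨m, k, rfl⟩ := hx
      refine ⟨neg1 (-k) * (-m), -k, ?_⟩
      rw [← klein_comm]
      group

/-- Every endomorphism `κ` of the Klein bottle group sends the generator `a`
to a power of `a`. -/
theorem stmt5 (κ : KleinGroup →* KleinGroup) : ∃ ε : ℤ, κ ka = ka ^ ε := by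
  obtain ⟨m, k, hA⟩ := klein_nf (κ ka)
  have hrel : κ ka * κ kb * κ ka * (κ kb)⁻¹ = 1 := by
    rw [← map_inv, ← map_mul, ← map_mul, ← map_mul, klein_rel, map_one]
  have hA0 : Multiplicative.toAdd (kphi (κ ka)) = 0 := by
    have h1 : kphi (κ ka * κ kb * κ ka * (κ kb)⁻¹) = 1 := by rw [hrel, map_one]
    simp only [map_mul, map_inv] at h1
    have h2 := congrArg Multiplicative.toAdd h1
    simp only [toAdd_mul, toAdd_inv, toAdd_one] at h2
    omega
  have hk : k = 0 := by
    rw [hA] at hA0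
    simp only [map_mul, map_zpow, kphi_ka, kphi_kb, one_zpow, one_mul] at hA0
    simpa using hA0
  exact ⟨m, by rw [hA, hk]; simp⟩
end

section
/- Every automorphism φ of the Klein bottle group ℤ ⋊ ℤ has infinitely many φ-twisted conjugacy classes, i.e., R(φ) = ∞; hence the Klein bottle group has the R_∞ property. -/
namespace KleinAux

/-- `(-1)^q` as an integer. -/
def u (q : ℤ) : ℤ := ((-1 : ℤˣ) ^ q : ℤˣ)

lemma u_add (a b : ℤ) : u (a + b) = u a * u b := by
  simp [u, zpow_add]

@[simp] lemma u_zero : u 0 = 1 := by simp [u]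

@[simp] lemma u_one : u 1 = -1 := by simp [u]

lemma u_mul_self (a : ℤ) : u a * u a = 1 := by
  have : ((-1 : ℤˣ) ^ a) * ((-1 : ℤˣ) ^ a) = 1 := by
    rw [← mul_zpow]; norm_num
  simpa [u, ← Units.val_mul] using congrArg (Units.val) this

@[simp] lemma u_neg (a : ℤ) : u (-a) = u a := by
  have h1 : u (-a) * u a = 1 := by rw [← u_add]; simp
  have h2 := u_mul_self a
  calc u (-a) = u (-a) * (u a * u a) := by rw [h2, mul_one]
  _ = (u (-a) * u a) * u a := by ring
  _ = u a := by rw [h1, one_mul]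

/-- The model of the Klein bottle group: `ℤ ⋊ ℤ` with `(p,q)·(r,s) = (p + (-1)^q r, q+s)`. -/
@[ext] structure Kp where
  p : ℤ
  q : ℤ

def kmul (x y : Kp) : Kp := ⟨x.p + u x.q * y.p, x.q + y.q⟩
def kinv (x : Kp) : Kp := ⟨-(u x.q * x.p), -x.q⟩

instance : Group Kp where
  mul := kmul
  one := ⟨0, 0⟩
  inv := kinv
  mul_assoc x y z := by
    show kmul (kmul x y) z = kmul x (kmul y z)
    ext <;> simp [kmul, u_add] <;> ring
  one_mul x := by
    show kmul ⟨0, 0⟩ x = x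
    ext <;> simp [kmul]
  mul_one x := by
    show kmul x ⟨0, 0⟩ = x
    ext <;> simp [kmul]
  inv_mul_cancel x := by
    show kmul (kinv x) x = ⟨0, 0⟩
    ext <;> simp [kinv, kmul, u_mul_self] <;> ring

lemma mul_def (x y : Kp) : x * y = ⟨x.p + u x.q * y.p, x.q + y.q⟩ := rfl
lemma inv_def (x : Kp) : x⁻¹ = ⟨-(u x.q * x.p), -x.q⟩ := rfl
lemma one_def : (1 : Kp) = ⟨0, 0⟩ := rfl

def A : Kp := ⟨1, 0⟩
def B : Kp := ⟨0, 1⟩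

lemma apow (n : ℤ) : A ^ n = (⟨n, 0⟩ : Kp) := by
  induction n using Int.induction_on with
  | zero => rw [zpow_zero]; rfl
  | succ i ih =>
    rw [zpow_add_one, ih]
    ext <;> simp [mul_def, A]
  | pred i ih =>
    rw [zpow_sub_one, ih]
    ext <;> simp [mul_def, inv_def, A] <;> omega

lemma bpow (n : ℤ) : B ^ n = (⟨0, n⟩ : Kp) := by
  induction n using Int.induction_on with
  | zero => rw [zpow_zero]; rfl
  | succ i ih =>
    rw [zpow_add_one, ih]
    ext <;> simp [mul_def, B]
  | pred i ih =>
    rw [zpow_sub_one, ih]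
    ext <;> simp [mul_def, inv_def, B] <;> omega

lemma decomp (p q : ℤ) : (⟨p, q⟩ : Kp) = A ^ p * B ^ q := by
  rw [apow, bpow]
  ext <;> simp [mul_def]

lemma q_zpow (x : Kp) (n : ℤ) : (x ^ n).q = n * x.q := by
  induction n using Int.induction_on with
  | zero => rw [zpow_zero]; simp [one_def]
  | succ i ih => rw [zpow_add_one]; simp only [mul_def]; rw [ih]; ring
  | pred i ih => rw [zpow_sub_one]; simp only [mul_def, inv_def]; rw [ih]; ring

/- ### relations in the Klein group -/

lemma rel1 : ka * kb * ka * kb⁻¹ = 1 := by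
  have hmem : (FreeGroup.of 0 * FreeGroup.of 1 * FreeGroup.of 0 * (FreeGroup.of 1)⁻¹ :
      FreeGroup (Fin 2)) ∈ Subgroup.normalClosure kleinRels :=
    Subgroup.subset_normalClosure rfl
  have h : PresentedGroup.mk kleinRels
      (FreeGroup.of 0 * FreeGroup.of 1 * FreeGroup.of 0 * (FreeGroup.of 1)⁻¹) = 1 :=
    (QuotientGroup.eq_one_iff _).mpr hmem
  simpa [ka, kb, PresentedGroup.of, map_mul, map_inv] using h

lemma rel2 : kb * ka * kb⁻¹ = ka⁻¹ := by
  calc kb * ka * kb⁻¹ = ka⁻¹ * (ka * kb * ka * kb⁻¹) := by group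
  _ = ka⁻¹ := by rw [rel1, mul_one]

lemma rel3 : kb⁻¹ * ka * kb = ka⁻¹ := by
  have hc : ka * kb = kb * ka⁻¹ := by
    calc ka * kb = (ka * kb * ka * kb⁻¹) * (kb * ka⁻¹) := by group
    _ = kb * ka⁻¹ := by rw [rel1, one_mul]
  calc kb⁻¹ * ka * kb = kb⁻¹ * (ka * kb) := by group
  _ = kb⁻¹ * (kb * ka⁻¹) := by rw [hc]
  _ = ka⁻¹ := by group

lemma conj_b_pow (n : ℤ) : kb ^ n * ka * (kb ^ n)⁻¹ = ka ^ (u n) := by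
  induction n using Int.induction_on with
  | zero => simp
  | succ i ih =>
    calc kb ^ ((i : ℤ) + 1) * ka * (kb ^ ((i : ℤ) + 1))⁻¹
        = kb * (kb ^ (i : ℤ) * ka * (kb ^ (i : ℤ))⁻¹) * kb⁻¹ := by
          rw [zpow_add_one]; group
      _ = kb * ka ^ (u i) * kb⁻¹ := by rw [ih]
      _ = (kb * ka * kb⁻¹) ^ (u i) := conj_zpow.symm
      _ = (ka⁻¹) ^ (u i) := by rw [rel2]
      _ = ka ^ (u ((i : ℤ) + 1)) := by
          rw [inv_zpow, ← zpow_neg]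
          congr 1
          rw [u_add, u_one]; ring
  | pred i ih =>
    have cz : ∀ m : ℤ, (kb⁻¹ * ka * kb) ^ m = kb⁻¹ * ka ^ m * kb := by
      intro m
      simpa using (conj_zpow (i := m) (a := kb⁻¹) (b := ka))
    calc kb ^ (-(i : ℤ) - 1) * ka * (kb ^ (-(i : ℤ) - 1))⁻¹
        = kb⁻¹ * (kb ^ (-(i : ℤ)) * ka * (kb ^ (-(i : ℤ)))⁻¹) * kb := by
          rw [zpow_sub_one]; group
      _ = kb⁻¹ * ka ^ (u (-(i : ℤ))) * kb := by rw [ih]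
      _ = (kb⁻¹ * ka * kb) ^ (u (-(i : ℤ))) := (cz _).symm
      _ = (ka⁻¹) ^ (u (-(i : ℤ))) := by rw [rel3]
      _ = ka ^ (u (-(i : ℤ) - 1)) := by
          rw [inv_zpow, ← zpow_neg]
          congr 1
          rw [sub_eq_add_neg, u_add]
          simp

lemma conj_b_pow' (n r : ℤ) : kb ^ n * ka ^ r * (kb ^ n)⁻¹ = ka ^ (u n * r) := by
  have h : kb ^ n * ka ^ r * (kb ^ n)⁻¹ = (kb ^ n * ka * (kb ^ n)⁻¹) ^ r := conj_zpow.symm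
  rw [h, conj_b_pow, ← zpow_mul]

/- ### the isomorphism -/

def fgen : Fin 2 → Kp := ![A, B]

lemma relcheck : ∀ r ∈ kleinRels, FreeGroup.lift fgen r = 1 := by
  intro r hr
  rw [kleinRels, Set.mem_singleton_iff] at hr
  subst hr
  have h : A * B * A * B⁻¹ = 1 := by
    ext <;> simp [mul_def, inv_def, one_def, A, B]
  simpa [fgen] using h

def θ : KleinGroup →* Kp := PresentedGroup.toGroup relcheck

lemma θ_ka : θ ka = A := by simp [θ, ka, fgen]
lemma θ_kb : θ kb = B := by simp [θ, kb, fgen]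

def θ' : Kp →* KleinGroup where
  toFun x := ka ^ x.p * kb ^ x.q
  map_one' := by simp [one_def]
  map_mul' x y := by
    have key : kb ^ x.q * ka ^ y.p = ka ^ (u x.q * y.p) * kb ^ x.q := by
      calc kb ^ x.q * ka ^ y.p
          = (kb ^ x.q * ka ^ y.p * (kb ^ x.q)⁻¹) * kb ^ x.q := by group
        _ = ka ^ (u x.q * y.p) * kb ^ x.q := by rw [conj_b_pow']
    show ka ^ (x * y).p * kb ^ (x * y).q = (ka ^ x.p * kb ^ x.q) * (ka ^ y.p * kb ^ y.q)
    simp only [mul_def]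
    calc ka ^ (x.p + u x.q * y.p) * kb ^ (x.q + y.q)
        = ka ^ x.p * (ka ^ (u x.q * y.p) * kb ^ x.q) * kb ^ y.q := by
          rw [zpow_add, zpow_add]; group
      _ = ka ^ x.p * (kb ^ x.q * ka ^ y.p) * kb ^ y.q := by rw [key]
      _ = (ka ^ x.p * kb ^ x.q) * (ka ^ y.p * kb ^ y.q) := by group

lemma θ'_apply (x : Kp) : θ' x = ka ^ x.p * kb ^ x.q := rfl

lemma θ_θ' (x : Kp) : θ (θ' x) = x := by
  rw [θ'_apply, map_mul, map_zpow, map_zpow, θ_ka, θ_kb, apow, bpow]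
  ext <;> simp [mul_def]

lemma θ'_θ (g : KleinGroup) : θ' (θ g) = g := by
  have hcomp : θ'.comp θ = MonoidHom.id KleinGroup := by
    apply PresentedGroup.ext
    intro x
    fin_cases x <;>
      simp [θ, fgen, θ'_apply, A, B, ka, kb]
  calc θ' (θ g) = (θ'.comp θ) g := rfl
  _ = g := by rw [hcomp]; rfl

def e : KleinGroup ≃* Kp where
  toFun := θ
  invFun := θ'
  left_inv := θ'_θ
  right_inv := θ_θ'
  map_mul' := map_mul θ

/- ### structure of automorphisms of Kp -/

lemma relKp : B * A * B⁻¹ = A⁻¹ := by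
  ext <;> simp [mul_def, inv_def, A, B]

variable (ψ : MulAut Kp)

lemma psi_a_q : (ψ A).q = 0 := by
  have h : ψ B * ψ A * (ψ B)⁻¹ = (ψ A)⁻¹ := by
    have := congrArg ψ relKp
    simpa [map_mul, map_inv] using this
  have h2 := congrArg Kp.q h
  simp [mul_def, inv_def] at h2
  omega

def dd : ℤ := (ψ B).q
def ee : ℤ := (ψ A).p

lemma psi_A : ψ A = ⟨ee ψ, 0⟩ := by
  ext
  · rfl
  · exact psi_a_q ψ

lemma powP (c n : ℤ) : (⟨c, 0⟩ : Kp) ^ n = ⟨c * n, 0⟩ := by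
  rw [← apow c, ← zpow_mul, apow]

lemma psi_An (n : ℤ) : ψ (⟨n, 0⟩ : Kp) = ⟨ee ψ * n, 0⟩ := by
  rw [← apow, map_zpow, psi_A, powP]

lemma ee_unit : ee ψ = 1 ∨ ee ψ = -1 := by
  have h : ψ (ψ.symm A) = A := ψ.apply_symm_apply A
  rw [psi_A ψ.symm, psi_An] at h
  have hp := congrArg Kp.p h
  simp [A] at hp
  exact Int.isUnit_iff.mp (IsUnit.of_mul_eq_one _ hp)

lemma psi_q (x : Kp) : (ψ x).q = x.q * dd ψ := by
  obtain ⟨p, q⟩ := x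
  show (ψ (⟨p, q⟩ : Kp)).q = q * dd ψ
  conv_lhs => rw [decomp p q]
  rw [map_mul, map_zpow, map_zpow, psi_A]
  simp [mul_def, q_zpow, powP, dd]

lemma dd_unit : dd ψ = 1 ∨ dd ψ = -1 := by
  have h : ψ (ψ.symm B) = B := ψ.apply_symm_apply B
  have h2 := congrArg Kp.q h
  rw [psi_q ψ (ψ.symm B), psi_q ψ.symm B] at h2
  simp [B] at h2
  have h3 : dd ψ * dd ψ.symm = 1 := by rw [mul_comm]; exact h2
  exact Int.isUnit_iff.mp (IsUnit.of_mul_eq_one _ h3)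

/- ### the key family -/

lemma main : ∃ f : ℤ → Kp, ∀ n k : ℤ, twistedConj ψ.toMonoidHom (f n) (f k) → n = k := by
  rcases dd_unit ψ with hd | hd
  · -- d = 1 : second coordinate is invariant
    refine ⟨fun n => ⟨0, n⟩, ?_⟩
    rintro n k ⟨σ, hσ⟩
    have h2 := congrArg Kp.q hσ
    have h3 : (ψ σ).q = σ.q * dd ψ := psi_q ψ σ
    simp only [MulEquiv.coe_toMonoidHom] at h2
    simp [mul_def, inv_def, h3, hd] at h2
    omega
  · rcases ee_unit ψ with he | he
    · -- d = -1, e = 1 : use the slice q = 0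
      refine ⟨fun n => ⟨n, 0⟩, ?_⟩
      rintro n k ⟨σ, hσ⟩
      simp only [MulEquiv.coe_toMonoidHom] at hσ
      have hq := congrArg Kp.q hσ
      have h3 : (ψ σ).q = σ.q * dd ψ := psi_q ψ σ
      simp [mul_def, inv_def, h3, hd] at hq
      have hσq : σ.q = 0 := by omega
      have hσ0 : σ = (⟨σ.p, 0⟩ : Kp) := by ext <;> simp [hσq]
      rw [hσ0, psi_An] at hσ
      have hp := congrArg Kp.p hσ
      simp [mul_def, inv_def, he] at hp
      omega
    · -- d = -1, e = -1 : use the slice q = 1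
      refine ⟨fun n => ⟨n, 1⟩, ?_⟩
      rintro n k ⟨σ, hσ⟩
      simp only [MulEquiv.coe_toMonoidHom] at hσ
      have hq := congrArg Kp.q hσ
      have h3 : (ψ σ).q = σ.q * dd ψ := psi_q ψ σ
      simp [mul_def, inv_def, h3, hd] at hq
      have hσq : σ.q = 0 := by omega
      have hσ0 : σ = (⟨σ.p, 0⟩ : Kp) := by ext <;> simp [hσq]
      rw [hσ0, psi_An] at hσ
      have hp := congrArg Kp.p hσ
      simp [mul_def, inv_def, he] at hp
      omega

lemma tc_equiv {G : Type*} [Group G] (φ : G →* G) : Equivalence (twistedConj φ) where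
  refl a := ⟨1, by simp⟩
  symm {a b} := fun ⟨σ, h⟩ => ⟨σ⁻¹, by rw [h, map_inv]; group⟩
  trans {a b c} := fun ⟨σ, h1⟩ ⟨τ, h2⟩ => ⟨τ * σ, by rw [h2, h1, map_mul]; group⟩

end KleinAux

open KleinAux in
/-- Every automorphism of the Klein bottle group has infinitely many twisted
conjugacy classes: the Klein bottle group has the `R_∞` property. -/
theorem stmt9 (φ : MulAut KleinGroup) :
    Infinite (Quot (twistedConj φ.toMonoidHom)) := by
  set ψ : MulAut Kp := (e.symm.trans φ).trans e with hψ
  obtain ⟨f, hf⟩ := main ψ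
  apply Infinite.of_injective
    (fun n : ℤ => Quot.mk (twistedConj φ.toMonoidHom) (e.symm (f n)))
  intro n k h
  have htc : twistedConj φ.toMonoidHom (e.symm (f n)) (e.symm (f k)) :=
    ((tc_equiv φ.toMonoidHom).eqvGen_iff).mp (Quot.eq.mp h)
  obtain ⟨σ, hσ⟩ := htc
  apply hf n k
  refine ⟨e σ, ?_⟩
  have h2 := congrArg e hσ
  simp only [map_mul, map_inv, MulEquiv.apply_symm_apply] at h2
  simpa [hψ, MulEquiv.trans_apply, MulEquiv.coe_toMonoidHom,
    MulEquiv.symm_apply_apply] using h2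
end

section
/- The infinite dihedral-type group ℤ ⋊ ℤ/2 (with ℤ/2 acting by negation) has the R_∞ property: every automorphism has infinitely many twisted conjugacy classes. -/
open DihedralGroup

namespace Stmt11Aux

lemma inv_r (i : ℤ) : (r i : DihedralGroup 0)⁻¹ = (r (-i) : DihedralGroup 0) := rfl
lemma inv_sr (i : ℤ) : (sr i : DihedralGroup 0)⁻¹ = (sr i : DihedralGroup 0) := rfl
lemma r_mul_r' (i j : ℤ) : (r i * r j : DihedralGroup 0) = r (i + j) := rfl
lemma r_mul_sr' (i j : ℤ) : (r i * sr j : DihedralGroup 0) = sr (j - i) := rfl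
lemma sr_mul_r' (i j : ℤ) : (sr i * r j : DihedralGroup 0) = sr (i + j) := rfl
lemma sr_mul_sr' (i j : ℤ) : (sr i * sr j : DihedralGroup 0) = r (j - i) := rfl

lemma phi_r (φ : MulAut (DihedralGroup 0)) (i : ℤ) :
    ∃ j : ℤ, φ (r i) = r j := by
  rcases h : φ (r i) with j | j
  · exact ⟨j, rfl⟩
  · exfalso
    have h2 : φ (r i * r i) = 1 := by
      rw [map_mul, h, sr_mul_sr, sub_self, one_def]
    have h3 : (r i * r i : DihedralGroup 0) = 1 := by
      have := φ.injective (h2.trans (map_one φ.toMonoidHom).symm)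
      simpa using this
    rw [r_mul_r', one_def] at h3
    have h4 : i + i = (0 : ℤ) := r.inj h3
    have h5 : i = 0 := by omega
    subst h5
    rw [show (r (0:ℤ) : DihedralGroup 0) = 1 from rfl, map_one] at h
    exact absurd h.symm (fun h' => by rw [one_def] at h'; cases h')

lemma phi_sr (φ : MulAut (DihedralGroup 0)) :
    ∃ k : ℤ, φ (sr 0) = sr k := by
  rcases h : φ (sr 0) with j | j
  · exfalso
    have h2 : φ (sr 0 * sr 0) = 1 := by rw [sr_mul_self, map_one]
    rw [map_mul, h, r_mul_r] at h2
    rw [one_def] at h2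
    have h4 : j + j = (0 : ZMod 0) := r.inj h2
    have h5 : j = 0 := by
      have h6 : (show ℤ from j) + (show ℤ from j) = 0 := h4
      have : (show ℤ from j) = 0 := by omega
      exact this
    subst h5
    have : (sr 0 : DihedralGroup 0) = 1 := φ.injective (by rw [h, map_one]; rfl)
    rw [one_def] at this
    exact absurd this (fun h => by cases h)
  · exact ⟨j, rfl⟩

lemma phi_form (φ : MulAut (DihedralGroup 0)) :
    ∃ u k : ℤ, (u = 1 ∨ u = -1) ∧ (∀ i : ℤ, φ (r i) = r (u * i)) ∧
      (∀ j : ℤ, φ (sr j) = sr (k + u * j)) := by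
  choose f hf using phi_r φ
  have hadd : ∀ i j : ℤ, f (i + j) = f i + f j := by
    intro i j
    have : φ (r i * r j) = r (f i) * r (f j) := by rw [map_mul, hf, hf]
    rw [r_mul_r', r_mul_r', hf] at this
    exact r.inj this
  have hlin : ∀ i : ℤ, f i = f 1 * i := by
    have h0 : f 0 = 0 := by have h := hadd 0 0; rw [add_zero] at h; omega
    intro i
    induction i using Int.induction_on with
    | zero => simpa using h0
    | succ n ih => rw [hadd, ih]; ring
    | pred n ih =>
      have h1 : f (-1) = -f 1 := by have := hadd 1 (-1); simp at this; omega
      rw [show (-(n:ℤ) - 1) = -(n:ℤ) + -1 from by ring, hadd, ih, h1]; ring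
  obtain ⟨m, hm⟩ := phi_r φ.symm 1
  have hmu : f 1 * m = 1 := by
    have : φ (φ.symm (r (1:ℤ))) = r 1 := φ.apply_symm_apply (r (1:ℤ))
    rw [hm, hf, hlin] at this
    exact r.inj this
  have hunit : f 1 = 1 ∨ f 1 = -1 := by
    rcases Int.isUnit_iff.mp (IsUnit.of_mul_eq_one _ hmu) with h | h <;> [left; right] <;> exact h
  obtain ⟨k, hk⟩ := phi_sr φ
  refine ⟨f 1, k, hunit, fun i => by rw [hf, hlin], fun j => ?_⟩
  have : (sr j : DihedralGroup 0) = sr 0 * r j := by show (sr j : DihedralGroup 0) = sr ((0:ℤ) + j); exact congrArg sr (zero_add j).symm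
  rw [this, map_mul, hk, hf, hlin, sr_mul_r']

end Stmt11Aux

namespace Stmt11Aux

lemma cases_Z (x : DihedralGroup 0) : (∃ i : ℤ, x = r i) ∨ (∃ i : ℤ, x = sr i) := by
  rcases x with i | i
  exacts [Or.inl ⟨i, rfl⟩, Or.inr ⟨i, rfl⟩]

/-- Invariant for the case `u = 1`: measures rotation classes. -/
def Fr (k : ℤ) : DihedralGroup 0 → ℕ
  | .r i => (2 * (show ℤ from i) - k).natAbs
  | .sr _ => 0

/-- Invariant for the case `u = -1`: measures reflection classes. -/
def Fsr (k : ℤ) : DihedralGroup 0 → ℕ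
  | .r _ => 0
  | .sr j => (2 * (show ℤ from j) - k).natAbs

lemma Fr_inv (φ : MulAut (DihedralGroup 0)) (k : ℤ)
    (hu : ∀ i : ℤ, φ (r i) = r i) (hk : ∀ j : ℤ, φ (sr j) = sr (k + j)) :
    ∀ a b, twistedConj φ.toMonoidHom a b → Fr k a = Fr k b := by
  rintro a b ⟨σ, rfl⟩
  have hφ : ∀ x, φ.toMonoidHom x = φ x := fun _ => rfl
  rcases cases_Z σ with ⟨m, rfl⟩ | ⟨m, rfl⟩ <;> rcases cases_Z a with ⟨i, rfl⟩ | ⟨i, rfl⟩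
  · rw [hφ, hu, inv_r, r_mul_r', r_mul_r']
    show ((2:ℤ) * i - k).natAbs = (2 * (m + i + -m) - k).natAbs
    omega
  · rw [hφ, hu, inv_r, r_mul_sr', sr_mul_r']; rfl
  · rw [hφ, hk, inv_sr, sr_mul_r', sr_mul_sr']
    show ((2:ℤ) * i - k).natAbs = (2 * ((k + m) - (m + i)) - k).natAbs
    omega
  · rw [hφ, hk, inv_sr, sr_mul_sr', r_mul_sr']; rfl

lemma Fsr_inv (φ : MulAut (DihedralGroup 0)) (k : ℤ)
    (hu : ∀ i : ℤ, φ (r i) = r (-i)) (hk : ∀ j : ℤ, φ (sr j) = sr (k + -j)) :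
    ∀ a b, twistedConj φ.toMonoidHom a b → Fsr k a = Fsr k b := by
  rintro a b ⟨σ, rfl⟩
  have hφ : ∀ x, φ.toMonoidHom x = φ x := fun _ => rfl
  rcases cases_Z σ with ⟨m, rfl⟩ | ⟨m, rfl⟩ <;> rcases cases_Z a with ⟨i, rfl⟩ | ⟨i, rfl⟩
  · rw [hφ, hu, inv_r, r_mul_r', r_mul_r']; rfl
  · rw [hφ, hu, inv_r, r_mul_sr', sr_mul_r']
    show ((2:ℤ) * i - k).natAbs = (2 * ((i - m) + - -m) - k).natAbs
    omega
  · rw [hφ, hk, inv_sr, sr_mul_r', sr_mul_sr']; rfl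
  · rw [hφ, hk, inv_sr, sr_mul_sr', r_mul_sr']
    show ((2:ℤ) * i - k).natAbs = (2 * ((k + -m) - (i - m)) - k).natAbs
    omega

end Stmt11Aux

/-- The infinite dihedral group `ℤ ⋊ ℤ/2` (realized as `DihedralGroup 0`) has the
`R_∞` property: every automorphism has infinitely many twisted conjugacy classes. -/
theorem stmt11 (φ : MulAut (DihedralGroup 0)) :
    Infinite (Quot (twistedConj φ.toMonoidHom)) := by
  obtain ⟨u, k, hu1, hu, hk⟩ := Stmt11Aux.phi_form φ
  rcases hu1 with rfl | rfl
  · -- u = 1 : rotation classes are infinite in number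
    have hu' : ∀ i : ℤ, φ (r i) = r i := fun i => by simpa using hu i
    have hk' : ∀ j : ℤ, φ (sr j) = sr (k + j) := fun j => by simpa using hk j
    have key : ∀ x y, Quot.mk (twistedConj φ.toMonoidHom) x = Quot.mk _ y →
        Stmt11Aux.Fr k x = Stmt11Aux.Fr k y := fun x y h =>
      congrArg (Quot.lift (Stmt11Aux.Fr k) (Stmt11Aux.Fr_inv φ k hu' hk')) h
    refine Infinite.of_injective
      (fun n : ℕ => Quot.mk _ (r (show ℤ from (k.natAbs : ℤ) + 1 + (n : ℤ)))) (fun a b h => ?_)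
    have h3 : (2 * ((k.natAbs : ℤ) + 1 + a) - k).natAbs
        = (2 * ((k.natAbs : ℤ) + 1 + b) - k).natAbs := key _ _ h
    omega
  · -- u = -1 : reflection classes are infinite in number
    have hu' : ∀ i : ℤ, φ (r i) = r (-i) := fun i => by simpa using hu i
    have hk' : ∀ j : ℤ, φ (sr j) = sr (k + -j) := fun j => by
      have := hk j; rw [show (-1 : ℤ) * j = -j by ring] at this; exact this
    have key : ∀ x y, Quot.mk (twistedConj φ.toMonoidHom) x = Quot.mk _ y →
        Stmt11Aux.Fsr k x = Stmt11Aux.Fsr k y := fun x y h =>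
      congrArg (Quot.lift (Stmt11Aux.Fsr k) (Stmt11Aux.Fsr_inv φ k hu' hk')) h
    refine Infinite.of_injective
      (fun n : ℕ => Quot.mk _ (sr (show ℤ from (k.natAbs : ℤ) + 1 + (n : ℤ)))) (fun a b h => ?_)
    have h3 : (2 * ((k.natAbs : ℤ) + 1 + a) - k).natAbs
        = (2 * ((k.natAbs : ℤ) + 1 + b) - k).natAbs := key _ _ h
    omega
end

section
/- Let φ be an automorphism of the infinite dihedral group D∞ = ℤ ⋊ ℤ/2 whose restriction to the characteristic subgroup ℤ is multiplication by -1, and suppose φ(0, 1) = (n, 1). Then for each r, the φ-twisted conjugacy class of the reflection (r, 1) is exactly {(r, 1), (n - r, 1)}; in particular each class among the reflections has at most two elements, and R(φ) = ∞. -/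
namespace TCaux

open DihedralGroup

lemma inv_r (i : ZMod 0) : (r i : DihedralGroup 0)⁻¹ = r (-i) := by
  apply inv_eq_of_mul_eq_one_right; rw [r_mul_r, add_neg_cancel]; rfl

lemma inv_sr (i : ZMod 0) : (sr i : DihedralGroup 0)⁻¹ = sr i := by
  apply inv_eq_of_mul_eq_one_right; exact sr_mul_self i

lemma twisted_equiv {G : Type*} [Group G] (φ : MulAut G) :
    Equivalence (twistedConj φ.toMonoidHom) := by
  constructor
  · intro a; exact ⟨1, by simp⟩
  · rintro a b ⟨σ, rfl⟩
    refine ⟨σ⁻¹, ?_⟩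
    simp [mul_assoc]
  · rintro a b c ⟨σ, rfl⟩ ⟨τ, rfl⟩
    refine ⟨τ * σ, ?_⟩
    simp [mul_assoc]

end TCaux

/-- Let `φ` be an automorphism of the infinite dihedral group whose restriction to the
rotation subgroup `ℤ` is `-1`, with `φ(0,1) = (n,1)`. Then the twisted conjugacy class
of each reflection `(k,1)` is exactly `{(k,1), (n-k,1)}`, and `R(φ) = ∞`. -/
theorem stmt12 (φ : MulAut (DihedralGroup 0)) (n : ZMod 0)
    (hr : ∀ j : ZMod 0, φ (DihedralGroup.r j) = DihedralGroup.r (-j))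
    (hs : φ (DihedralGroup.sr 0) = DihedralGroup.sr n) :
    (∀ k : ZMod 0, {g : DihedralGroup 0 | twistedConj φ.toMonoidHom (DihedralGroup.sr k) g} =
      {DihedralGroup.sr k, DihedralGroup.sr (n - k)}) ∧
    Infinite (Quot (twistedConj φ.toMonoidHom)) := by
  open DihedralGroup TCaux in
  have hsr : ∀ j : ZMod 0, φ (sr j) = sr (n - j) := by
    intro j
    have : (sr j : DihedralGroup 0) = sr 0 * r j := by rw [sr_mul_r, zero_add]
    rw [this, map_mul, hs, hr, sr_mul_r]
    ring_nf
  have hclass : ∀ k : ZMod 0,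
      {g : DihedralGroup 0 | twistedConj φ.toMonoidHom (sr k) g} = {sr k, sr (n - k)} := by
    intro k
    ext g
    constructor
    · rintro ⟨σ, rfl⟩
      rcases σ with i | i
      · left
        simp only [MulEquiv.coe_toMonoidHom, hr, TCaux.inv_r, neg_neg, r_mul_sr, sr_mul_r]
        ring_nf
      · right
        simp only [MulEquiv.coe_toMonoidHom, hsr, TCaux.inv_sr, sr_mul_sr, r_mul_sr]
        have : n - i - (k - i) = n - k := by ring
        rw [this]
        rfl
    · rintro (rfl | rfl)
      · exact ⟨1, by simp⟩
      · refine ⟨sr 0, ?_⟩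
        simp only [MulEquiv.coe_toMonoidHom, hs, TCaux.inv_sr, sr_mul_sr, r_mul_sr]
        ring_nf
  refine ⟨hclass, ?_⟩
  have heqv := TCaux.twisted_equiv φ
  have hN : ∃ N : ℤ, (show ZMod 0 from N) = n := ⟨n, rfl⟩
  obtain ⟨N, rfl⟩ := hN
  refine Infinite.of_injective
    (fun m : ℕ => Quot.mk (twistedConj φ.toMonoidHom)
      (sr (show ZMod 0 from (N.natAbs + 1 + m : ℤ)))) ?_
  intro a b hab
  have hrel : twistedConj φ.toMonoidHom (sr (show ZMod 0 from (N.natAbs + 1 + a : ℤ)))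
      (sr (show ZMod 0 from (N.natAbs + 1 + b : ℤ))) :=
    heqv.eqvGen_iff.mp (Quot.eq.mp hab)
  have hmem : (sr (show ZMod 0 from (N.natAbs + 1 + b : ℤ)) : DihedralGroup 0) ∈
      ({sr (show ZMod 0 from (N.natAbs + 1 + a : ℤ)),
        sr ((show ZMod 0 from N) - (show ZMod 0 from (N.natAbs + 1 + a : ℤ)))} :
        Set (DihedralGroup 0)) := by
    rw [← hclass]
    exact hrel
  rcases hmem with h | h
  · have h2 : (N.natAbs + 1 + b : ℤ) = (N.natAbs + 1 + a : ℤ) :=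
      DihedralGroup.sr.inj h
    omega
  · exfalso
    have h2 : (N.natAbs + 1 + b : ℤ) =
        ((show ZMod 0 from N) - (show ZMod 0 from (N.natAbs + 1 + a : ℤ)) : ZMod 0) :=
      DihedralGroup.sr.inj h
    have h3 : (N.natAbs + 1 + b : ℤ) = N - (N.natAbs + 1 + a) := h2
    omega
end

section
/- For every n ≥ 0, the group π₁(K) × ℤ^n, where π₁(K) = ⟨a, b | abab^{-1}⟩ is the Klein bottle group, has the R_∞ property: every automorphism has infinitely many twisted conjugacy classes. -/
namespace R14

open DihedralGroup

abbrev D := DihedralGroup 0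

/-- The identity map `ZMod 0 → ℤ`. -/
def z2i : ZMod 0 → ℤ := fun k => k

@[simp] lemma z2i_add (a b : ZMod 0) : z2i (a + b) = z2i a + z2i b := rfl
@[simp] lemma z2i_sub (a b : ZMod 0) : z2i (a - b) = z2i a - z2i b := rfl
@[simp] lemma z2i_neg (a : ZMod 0) : z2i (-a) = - z2i a := rfl
@[simp] lemma z2i_mul (a b : ZMod 0) : z2i (a * b) = z2i a * z2i b := rfl
@[simp] lemma z2i_zero : z2i 0 = 0 := rfl
@[simp] lemma z2i_one : z2i 1 = 1 := rfl
@[simp] lemma z2i_int (k : ℤ) : z2i k = k := rfl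

@[simp] lemma r_inv (i : ZMod 0) : (r i : D)⁻¹ = r (-i) := rfl
@[simp] lemma sr_inv (i : ZMod 0) : (sr i : D)⁻¹ = sr i := rfl

lemma D_cases (x : D) : (∃ k : ℤ, x = r k) ∨ (∃ k : ℤ, x = sr k) := by
  rcases x with k | k
  · exact Or.inl ⟨k, rfl⟩
  · exact Or.inr ⟨k, rfl⟩

lemma r_injD {a b : ZMod 0} (h : (r a : D) = r b) : z2i a = z2i b := by
  injection h

lemma sr_injD {a b : ZMod 0} (h : (sr a : D) = sr b) : z2i a = z2i b := by
  injection h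

lemma r_ne_srD {a b : ZMod 0} : (r a : D) ≠ sr b := by
  intro h; injection h

lemma r_one_zpow (k : ℤ) : (r 1 : D) ^ k = r k := by
  induction k using Int.induction_on with
  | zero => rfl
  | succ n ih =>
      erw [zpow_add_one, ih, r_mul_r]; rfl
  | pred n ih =>
      erw [zpow_sub_one, ih, show ((r 1 : D))⁻¹ = r (-1) from rfl, r_mul_r]
      exact congrArg r (show (-(n:ℤ) + -1 : ℤ) = -n - 1 by ring)

lemma D_center_trivial (z : D) (h : ∀ w : D, z * w = w * z) : z = 1 := by
  rcases D_cases z with ⟨k, rfl⟩ | ⟨k, rfl⟩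
  · have h1 := h (sr 0)
    erw [r_mul_sr, sr_mul_r] at h1
    have h2 := sr_injD h1
    change (0:ℤ) - k = 0 + k at h2
    have hk : k = 0 := by omega
    rw [hk, DihedralGroup.one_def]; rfl
  · exfalso
    have h1 := h (r 1)
    erw [sr_mul_r, r_mul_sr] at h1
    have h2 := sr_injD h1
    change k + 1 = k - 1 at h2
    omega

/-! ### The map from the Klein bottle group to the infinite dihedral group -/

def f0 : Fin 2 → D := fun i => if i = 0 then r 1 else sr 0

lemma hrels : ∀ w ∈ kleinRels, FreeGroup.lift f0 w = 1 := by
  intro w hw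
  rcases hw with rfl
  simp only [map_mul, map_inv, FreeGroup.lift_apply_of, f0]
  norm_num

def kf : KleinGroup →* D := PresentedGroup.toGroup hrels

@[simp] lemma kf_a : kf ka = r 1 := by
  rw [ka, kf, PresentedGroup.toGroup.of]; simp [f0]

@[simp] lemma kf_b : kf kb = sr 0 := by
  rw [kb, kf, PresentedGroup.toGroup.of]; simp [f0]

lemma kf_a_zpow (i : ℤ) : kf (ka ^ i) = r i := by
  rw [map_zpow, kf_a, r_one_zpow]

lemma kf_surj : Function.Surjective kf := by
  intro x
  rcases D_cases x with ⟨k, rfl⟩ | ⟨k, rfl⟩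
  · exact ⟨ka ^ k, kf_a_zpow k⟩
  · refine ⟨kb * ka ^ k, ?_⟩
    erw [map_mul, kf_b, kf_a_zpow, sr_mul_r, zero_add]

/-! ### Relations in the Klein group -/

lemma krel : ka * kb * ka * kb⁻¹ = 1 := by
  have hmem : (FreeGroup.of 0 * FreeGroup.of 1 * FreeGroup.of 0 * (FreeGroup.of 1)⁻¹ :
      FreeGroup (Fin 2)) ∈ Subgroup.normalClosure kleinRels :=
    Subgroup.subset_normalClosure rfl
  have h2 : ka * kb * ka * kb⁻¹ = PresentedGroup.mk kleinRels
      (FreeGroup.of 0 * FreeGroup.of 1 * FreeGroup.of 0 * (FreeGroup.of 1)⁻¹) := by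
    simp only [map_mul, map_inv]
    rfl
  rw [h2]
  exact (QuotientGroup.eq_one_iff _).2 hmem

lemma hba : kb * ka * kb⁻¹ = ka⁻¹ := by
  have h : ka * (kb * ka * kb⁻¹) = 1 := by
    rw [← krel]; group
  have := eq_inv_of_mul_eq_one_right h
  rw [← this]

lemma b_a_zpow (i : ℤ) : kb * ka ^ i = ka ^ (-i) * kb := by
  have h : kb * ka ^ i * kb⁻¹ = ka ^ (-i) := by
    rw [zpow_neg]
    calc kb * ka ^ i * kb⁻¹ = (kb * ka * kb⁻¹) ^ i := by rw [conj_zpow]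
    _ = (ka⁻¹) ^ i := by rw [hba]
    _ = (ka ^ i)⁻¹ := by group
  rw [← h]; group

lemma binv_a_zpow (i : ℤ) : kb⁻¹ * ka ^ i = ka ^ (-i) * kb⁻¹ := by
  have h := b_a_zpow (-i)
  rw [neg_neg] at h
  rw [← mul_right_inj kb, ← mul_assoc, ← mul_assoc, mul_inv_cancel, one_mul, h]
  group

lemma swap_pow (j : ℤ) : ∀ i : ℤ, ∃ i' : ℤ, kb ^ j * ka ^ i = ka ^ i' * kb ^ j := by
  induction j using Int.induction_on with
  | zero => intro i; exact ⟨i, by simp⟩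
  | succ n ih =>
      intro i
      obtain ⟨i', h⟩ := ih (-i)
      refine ⟨i', ?_⟩
      rw [zpow_add_one, mul_assoc, b_a_zpow, ← mul_assoc, ← mul_assoc, h]
  | pred n ih =>
      intro i
      obtain ⟨i', h⟩ := ih (-i)
      refine ⟨i', ?_⟩
      rw [zpow_sub_one, mul_assoc, binv_a_zpow, ← mul_assoc, ← mul_assoc, h]

lemma normal_form (g : KleinGroup) : ∃ i j : ℤ, g = ka ^ i * kb ^ j := by
  refine PresentedGroup.induction_on (C := fun g => ∃ i j : ℤ, g = ka ^ i * kb ^ j) g ?_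
  intro z
  induction z using FreeGroup.induction_on with
  | C1 => exact ⟨0, 0, by simp⟩
  | of x =>
      fin_cases x
      · exact ⟨1, 0, by simp [ka]; rfl⟩
      · exact ⟨0, 1, by simp [kb]; rfl⟩
  | inv_of x _ =>
      fin_cases x
      · exact ⟨-1, 0, by simp [ka]; rfl⟩
      · exact ⟨0, -1, by simp [kb]; rfl⟩
  | mul x y hx hy =>
      obtain ⟨i₁, j₁, h₁⟩ := hx
      obtain ⟨i₂, j₂, h₂⟩ := hy
      obtain ⟨i₃, h₃⟩ := swap_pow j₁ i₂
      refine ⟨i₁ + i₃, j₁ + j₂, ?_⟩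
      rw [map_mul, h₁, h₂, zpow_add, zpow_add]
      calc ka ^ i₁ * kb ^ j₁ * (ka ^ i₂ * kb ^ j₂)
          = ka ^ i₁ * (kb ^ j₁ * ka ^ i₂) * kb ^ j₂ := by group
        _ = ka ^ i₁ * (ka ^ i₃ * kb ^ j₁) * kb ^ j₂ := by rw [h₃]
        _ = ka ^ i₁ * ka ^ i₃ * (kb ^ j₁ * kb ^ j₂) := by group

lemma b_sq_central (w : KleinGroup) : (kb * kb) * w = w * (kb * kb) := by
  obtain ⟨i, j, rfl⟩ := normal_form w
  have c1 : (kb * kb) * ka ^ i = ka ^ i * (kb * kb) := by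
    have h1 := b_a_zpow i
    have h2 := b_a_zpow (-i)
    rw [neg_neg] at h2
    calc kb * kb * ka ^ i = kb * (kb * ka ^ i) := by group
      _ = kb * (ka ^ (-i) * kb) := by rw [h1]
      _ = (kb * ka ^ (-i)) * kb := by group
      _ = ka ^ i * (kb * kb) := by rw [h2]; group
  have c2 : (kb * kb) * kb ^ j = kb ^ j * (kb * kb) := by group
  calc (kb * kb) * (ka ^ i * kb ^ j) = ((kb * kb) * ka ^ i) * kb ^ j := by group
    _ = ka ^ i * ((kb * kb) * kb ^ j) := by rw [c1]; group
    _ = ka ^ i * (kb ^ j * (kb * kb)) := by rw [c2]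
    _ = ka ^ i * kb ^ j * (kb * kb) := by group

lemma sr0_sq : (sr 0 : D) * sr 0 = 1 := by
  rw [sr_mul_sr, sub_self, DihedralGroup.one_def]

lemma sq_zpow {G : Type*} [Group G] (g : G) (q : ℤ) : (g * g) ^ q = g ^ (q + q) := by
  rw [(Commute.refl g).mul_zpow, ← zpow_add]

lemma sr0_even_zpow (q : ℤ) : (sr 0 : D) ^ (q + q) = 1 := by
  rw [← sq_zpow, sr0_sq, one_zpow]

lemma ker_central (g : KleinGroup) (h : kf g = 1) : ∀ w, g * w = w * g := by
  obtain ⟨i, j, rfl⟩ := normal_form g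
  have hbj : kf (kb ^ j) = (sr 0 : D) ^ j := by rw [map_zpow, kf_b]
  rcases Int.even_or_odd j with ⟨q, hq⟩ | ⟨q, hq⟩
  · -- j = q + q : kf (kb ^ j) = 1
    have hsq : ((sr 0 : D) ^ j) = 1 := by
      rw [hq]; exact sr0_even_zpow q
    have hfi : kf (ka ^ i * kb ^ j) = r i := by
      rw [map_mul, kf_a_zpow, hbj, hsq, mul_one]
    rw [hfi] at h
    have hi : i = 0 := by
      rw [DihedralGroup.one_def] at h
      have h2 := r_injD h
      simp only [z2i_int, z2i_zero] at h2
      exact h2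
    subst hi
    intro w
    have hform : ka ^ (0:ℤ) * kb ^ j = (kb * kb) ^ q := by
      rw [zpow_zero, one_mul, hq, sq_zpow]
    rw [hform]
    have hc : Commute (kb * kb) w := b_sq_central w
    exact (hc.zpow_left q).eq
  · -- j = 2q + 1 : kf (ka ^ i * kb ^ j) = sr (-i) ≠ 1
    exfalso
    have hsq : ((sr 0 : D) ^ j) = sr 0 := by
      have h2q : (sr 0 : D) ^ (2 * q) = 1 := by
        rw [show 2 * q = q + q by ring]; exact sr0_even_zpow q
      rw [hq, zpow_add, h2q, zpow_one, one_mul]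
    have hfi : kf (ka ^ i * kb ^ j) = sr (0 - i) := by
      erw [map_mul, kf_a_zpow, hbj, hsq, r_mul_sr]; rfl
    rw [hfi, DihedralGroup.one_def] at h
    exact r_ne_srD h.symm



/-! ### Generic lemmas about twisted conjugacy -/

lemma infinite_of_inv {G : Type*} [Group G] (ψ : G →* G) (F : G → ℕ)
    (hinv : ∀ a σ, F (σ * a * (ψ σ)⁻¹) = F a) (x : ℕ → G)
    (hx : Function.Injective fun n => F (x n)) :
    Infinite (Quot (twistedConj ψ)) := by
  have hlift : ∀ a b, twistedConj ψ a b → F a = F b := by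
    rintro a b ⟨σ, rfl⟩
    exact (hinv a σ).symm
  refine Infinite.of_injective (fun n => Quot.mk (twistedConj ψ) (x n)) ?_
  intro n m h
  exact hx (by simpa using congrArg (Quot.lift F hlift) h)

lemma transfer {G H : Type*} [Group G] [Group H] (π : G →* H) (hs : Function.Surjective π)
    (φ : G →* G) (ψ : H →* H) (hcomm : ∀ g, ψ (π g) = π (φ g))
    (hinf : Infinite (Quot (twistedConj ψ))) : Infinite (Quot (twistedConj φ)) := by
  have hrel : ∀ a b, twistedConj φ a b → twistedConj ψ (π a) (π b) := by
    rintro a b ⟨σ, rfl⟩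
    exact ⟨π σ, by rw [map_mul, map_mul, map_inv, hcomm]⟩
  have hqs : Function.Surjective (Quot.map π hrel) := by
    intro q
    obtain ⟨h, rfl⟩ := Quot.exists_rep q
    obtain ⟨g, rfl⟩ := hs h
    exact ⟨Quot.mk _ g, rfl⟩
  exact @Infinite.of_surjective _ _ hinf _ hqs

/-! ### Twisted conjugacy invariants on the infinite dihedral group -/

/-- Invariant on translations. -/
def FR (e : ℤ) : D → ℕ
  | DihedralGroup.r k => (2 * z2i k - e).natAbs
  | DihedralGroup.sr _ => 0

@[simp] lemma FR_r (e : ℤ) (k : ZMod 0) : FR e (r k) = (2 * z2i k - e).natAbs := rfl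
@[simp] lemma FR_sr (e : ℤ) (k : ZMod 0) : FR e (sr k) = 0 := rfl

/-- Invariant on reflections. -/
def FS (e : ℤ) : D → ℕ
  | DihedralGroup.r _ => 0
  | DihedralGroup.sr k => (2 * z2i k - e).natAbs

@[simp] lemma FS_r (e : ℤ) (k : ZMod 0) : FS e (r k) = 0 := rfl
@[simp] lemma FS_sr (e : ℤ) (k : ZMod 0) : FS e (sr k) = (2 * z2i k - e).natAbs := rfl

theorem Dinf_R (ψ : D →* D) (hinj : Function.Injective ψ) (hsur : Function.Surjective ψ) :
    Infinite (Quot (twistedConj ψ)) := by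
  -- ψ (r 1) is a translation r d
  obtain ⟨d, hd⟩ : ∃ d : ℤ, ψ (r 1) = r d := by
    rcases D_cases (ψ (r 1)) with ⟨d, hd⟩ | ⟨c, hc⟩
    · exact ⟨d, hd⟩
    · exfalso
      have h1 : ψ (r 1 * r 1) = 1 := by
        erw [map_mul, hc, sr_mul_sr, sub_self, DihedralGroup.one_def]
      have h2 : (r 1 * r 1 : D) = 1 := hinj (by rw [h1, map_one])
      rw [r_mul_r, DihedralGroup.one_def] at h2
      have h3 := r_injD h2
      simp only [z2i_add, z2i_one, z2i_zero] at h3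
      omega
  have hpow : ∀ k : ℤ, ψ (r k) = r (d * k) := by
    intro k
    rw [← r_one_zpow k, map_zpow, hd, ← r_one_zpow d, ← zpow_mul, r_one_zpow]
  -- ψ (sr 0) is a reflection sr e
  obtain ⟨e, he⟩ : ∃ e : ℤ, ψ (sr 0) = sr e := by
    rcases D_cases (ψ (sr 0)) with ⟨c, hc⟩ | ⟨e, he⟩
    · exfalso
      have h1 : ψ (sr 0 * sr 0) = 1 := by rw [sr0_sq, map_one]
      erw [map_mul, hc, r_mul_r] at h1
      rw [DihedralGroup.one_def] at h1
      have h2 := r_injD h1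
      change c + c = (0:ℤ) at h2
      have hc0 : c = 0 := by omega
      subst hc0
      have h3 : ψ (sr 0) = ψ 1 := by rw [hc, map_one, DihedralGroup.one_def]; rfl
      have h4 := hinj h3
      rw [DihedralGroup.one_def] at h4
      exact r_ne_srD h4.symm
    · exact ⟨e, he⟩
  have hsr : ∀ k : ℤ, ψ (sr k) = sr (e + d * k) := by
    intro k
    erw [show (sr k : D) = sr 0 * r k by erw [sr_mul_r, zero_add], map_mul, he, hpow, sr_mul_r]; rfl
  -- d = 1 or d = -1
  have hd1 : d = 1 ∨ d = -1 := by
    obtain ⟨x, hx⟩ := hsur (r 1)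
    rcases D_cases x with ⟨k, rfl⟩ | ⟨k, rfl⟩
    · rw [hpow k] at hx
      have h2 := r_injD hx
      simp only [z2i_mul, z2i_int, z2i_one] at h2
      exact Int.isUnit_iff.mp (IsUnit.of_mul_eq_one k h2)
    · exfalso
      rw [hsr k] at hx
      exact r_ne_srD hx.symm
  rcases hd1 with rfl | rfl
  · -- d = 1 : use the invariant on translations
    refine infinite_of_inv ψ (FR e) ?_ (fun n => r ((e.natAbs + n + 1 : ℤ))) ?_
    · intro a σ
      rcases D_cases a with ⟨k, rfl⟩ | ⟨k, rfl⟩ <;>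
        rcases D_cases σ with ⟨m, rfl⟩ | ⟨m, rfl⟩
      · rw [hpow m]
        show (2 * (m + k + -(1 * m)) - e).natAbs = (2 * k - e).natAbs
        omega
      · rw [hsr m]
        show (2 * ((e + 1 * m) - (m + k)) - e).natAbs = (2 * k - e).natAbs
        omega
      · rw [hpow m]
        rfl
      · rw [hsr m]
        rfl
    · intro n m h
      change (2 * ((e.natAbs + n + 1 : ℤ)) - e).natAbs = (2 * ((e.natAbs + m + 1 : ℤ)) - e).natAbs at h
      omega
  · -- d = -1 : use the invariant on reflections
    refine infinite_of_inv ψ (FS e) ?_ (fun n => sr ((e.natAbs + n + 1 : ℤ))) ?_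
    · intro a σ
      rcases D_cases a with ⟨k, rfl⟩ | ⟨k, rfl⟩ <;>
        rcases D_cases σ with ⟨m, rfl⟩ | ⟨m, rfl⟩
      · rw [hpow m]
        rfl
      · rw [hsr m]
        rfl
      · rw [hpow m]
        show (2 * (k - m + -(-1 * m)) - e).natAbs = (2 * k - e).natAbs
        omega
      · rw [hsr m]
        show (2 * ((e + -1 * m) - (k - m)) - e).natAbs = (2 * k - e).natAbs
        omega
    · intro n m h
      change (2 * ((e.natAbs + n + 1 : ℤ)) - e).natAbs = (2 * ((e.natAbs + m + 1 : ℤ)) - e).natAbs at h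
      omega

end R14


open R14 in
/-- For every `n ≥ 0`, the group `π₁(K) × ℤⁿ` has the `R_∞` property. -/
theorem stmt14 (n : ℕ) (φ : MulAut (KleinGroup × Multiplicative (Fin n → ℤ))) :
    Infinite (Quot (twistedConj φ.toMonoidHom)) := by
  classical
  set G := KleinGroup × Multiplicative (Fin n → ℤ) with hG
  let π : G →* R14.D := R14.kf.comp (MonoidHom.fst _ _)
  have hπs : Function.Surjective π := by
    intro x
    obtain ⟨g, hg⟩ := R14.kf_surj x
    exact ⟨(g, 1), hg⟩
  -- elements of the kernel of π are central
  have hker_cent : ∀ g : G, π g = 1 → ∀ w : G, g * w = w * g := by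
    intro g hg w
    exact Prod.ext (R14.ker_central g.1 hg w.1) (mul_comm _ _)
  -- any automorphism preserves the kernel of π
  have key : ∀ (χ : G ≃* G) (g : G), π g = 1 → π (χ g) = 1 := by
    intro χ g hg
    have hc : ∀ w : G, χ g * w = w * χ g := by
      intro w
      have hcent := hker_cent g hg (χ.symm w)
      calc χ g * w = χ g * χ (χ.symm w) := by rw [MulEquiv.apply_symm_apply]
        _ = χ (g * χ.symm w) := (map_mul χ _ _).symm
        _ = χ (χ.symm w * g) := by rw [hcent]
        _ = w * χ g := by rw [map_mul, MulEquiv.apply_symm_apply]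
    apply R14.D_center_trivial
    intro u
    obtain ⟨v, rfl⟩ := hπs u
    rw [← map_mul, ← map_mul, hc v]
  -- well-definedness of the induced map
  have wd : ∀ (χ : G ≃* G) (g g' : G), π g = π g' → π (χ g) = π (χ g') := by
    intro χ g g' h
    have h1 : π (g * g'⁻¹) = 1 := by rw [map_mul, map_inv, h, mul_inv_cancel]
    have h2 := key χ _ h1
    rw [map_mul, map_inv, map_mul, map_inv] at h2
    exact mul_inv_eq_one.mp h2
  -- the induced map on the dihedral group
  let s : R14.D → G := Function.surjInv hπs
  have hs : ∀ u, π (s u) = u := Function.surjInv_eq hπs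
  let mkPsi : (G ≃* G) → (R14.D →* R14.D) := fun χ =>
    { toFun := fun u => π (χ (s u))
      map_one' := by
        show π (χ (s 1)) = 1
        have h1 : π (s 1) = π 1 := by rw [hs, map_one]
        rw [wd χ _ _ h1, map_one, map_one]
      map_mul' := by
        intro u v
        show π (χ (s (u * v))) = π (χ (s u)) * π (χ (s v))
        have h1 : π (s (u * v)) = π (s u * s v) := by rw [hs, map_mul, hs, hs]
        rw [wd χ _ _ h1, map_mul, map_mul] }
  have hcomm : ∀ (χ : G ≃* G) (g : G), mkPsi χ (π g) = π (χ g) := by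
    intro χ g
    exact wd χ _ _ (hs (π g))
  let ψ := mkPsi φ
  let ψ' := mkPsi φ.symm
  have hli : ∀ u, ψ' (ψ u) = u := by
    intro u
    have h0 : ψ u = π (φ (s u)) := rfl
    rw [h0, hcomm φ.symm, MulEquiv.symm_apply_apply, hs]
  have hri : ∀ u, ψ (ψ' u) = u := by
    intro u
    have h0 : ψ' u = π (φ.symm (s u)) := rfl
    rw [h0, hcomm φ, MulEquiv.apply_symm_apply, hs]
  have hinj : Function.Injective ψ := Function.LeftInverse.injective hli
  have hsur : Function.Surjective ψ := Function.RightInverse.surjective hri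
  refine R14.transfer π hπs φ.toMonoidHom ψ ?_ (R14.Dinf_R ψ hinj hsur)
  intro g
  exact hcomm φ g
end

section
/- For each integer r ≠ 0, let N_r = ⟨a, b, c | [a,c] = 1, [b,c] = 1, [a,b] = c^r⟩. The map a ↦ a²b, b ↦ a⁵b² (suitably defined on c) extends to an automorphism φ of N_r with finite Reidemeister number; hence N_r does not have the R_∞ property. -/
open scoped commutatorElement

/-- The relators of `N_r = ⟨a, b, c | [a,c] = 1, [b,c] = 1, [a,b] = c^r⟩`. -/
def NrRels (r : ℤ) : Set (FreeGroup (Fin 3)) :=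
  {⁅(FreeGroup.of 0 : FreeGroup (Fin 3)), FreeGroup.of 2⁆,
    ⁅(FreeGroup.of 1 : FreeGroup (Fin 3)), FreeGroup.of 2⁆,
    ⁅(FreeGroup.of 0 : FreeGroup (Fin 3)), FreeGroup.of 1⁆ * (FreeGroup.of 2) ^ (-r)}

namespace Stmt19

variable (r : ℤ)

abbrev G := PresentedGroup (NrRels r)

def A : G r := PresentedGroup.of 0
def B : G r := PresentedGroup.of 1
def Cc : G r := PresentedGroup.of 2

lemma rel_eq_one {x : FreeGroup (Fin 3)} (hx : x ∈ NrRels r) :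
    PresentedGroup.mk (NrRels r) x = 1 :=
  (QuotientGroup.eq_one_iff _).mpr (Subgroup.subset_normalClosure hx)

lemma comm_AC : A r * Cc r = Cc r * A r := by
  have h := rel_eq_one r (x := ⁅(FreeGroup.of 0 : FreeGroup (Fin 3)), FreeGroup.of 2⁆)
    (Or.inl rfl)
  rw [commutatorElement_def, map_mul, map_mul, map_mul, map_inv, map_inv] at h
  exact commutatorElement_eq_one_iff_mul_comm.mp h

lemma comm_BC : B r * Cc r = Cc r * B r := by
  have h := rel_eq_one r (x := ⁅(FreeGroup.of 1 : FreeGroup (Fin 3)), FreeGroup.of 2⁆)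
    (Or.inr (Or.inl rfl))
  rw [commutatorElement_def, map_mul, map_mul, map_mul, map_inv, map_inv] at h
  exact commutatorElement_eq_one_iff_mul_comm.mp h

lemma comm_AB : ⁅A r, B r⁆ = Cc r ^ r := by
  have h := rel_eq_one r (x := ⁅(FreeGroup.of 0 : FreeGroup (Fin 3)), FreeGroup.of 1⁆ *
    (FreeGroup.of 2) ^ (-r)) (Or.inr (Or.inr rfl))
  rw [map_mul, map_zpow, commutatorElement_def, map_mul, map_mul, map_mul, map_inv, map_inv] at h
  rw [commutatorElement_def]
  have : (PresentedGroup.mk (NrRels r)) (FreeGroup.of 2) = Cc r := rfl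
  rw [this] at h
  have h2 := mul_eq_one_iff_eq_inv.mp h
  show (PresentedGroup.mk (NrRels r)) (FreeGroup.of 0) * (PresentedGroup.mk (NrRels r)) (FreeGroup.of 1) *
        ((PresentedGroup.mk (NrRels r)) (FreeGroup.of 0))⁻¹ *
      ((PresentedGroup.mk (NrRels r)) (FreeGroup.of 1))⁻¹ = Cc r ^ r
  rw [h2, ← zpow_neg, neg_neg]

lemma Cc_comm (g : G r) : Commute (Cc r) g := by
  have h : ∀ x : G r, x ∈ Subgroup.centralizer {Cc r} := by
    intro x
    refine PresentedGroup.generated_by _ _ (fun j => ?_) x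
    rw [Subgroup.mem_centralizer_iff]
    rintro h rfl
    fin_cases j
    · exact (comm_AC r).symm
    · exact (comm_BC r).symm
    · rfl
  exact (h g) (Cc r) rfl

lemma Ck_comm (k : ℤ) (g : G r) : Commute (Cc r ^ k) g := ((Cc_comm r g).zpow_left k)

lemma hconj : A r * B r * (A r)⁻¹ = B r * Cc r ^ r := by
  have h := comm_AB r
  rw [commutatorElement_def] at h
  have h2 : A r * B r * (A r)⁻¹ = Cc r ^ r * B r := by rw [← h]; group
  rw [h2, (Ck_comm r r (B r)).eq]

lemma hconj' : (A r)⁻¹ * B r * A r = B r * Cc r ^ (-r) := by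
  have h1 : (A r)⁻¹ * (B r * Cc r ^ r) * A r = B r := by rw [← hconj r]; group
  have h2 : (A r)⁻¹ * B r * A r * Cc r ^ r = B r := by
    calc (A r)⁻¹ * B r * A r * Cc r ^ r
        = (A r)⁻¹ * B r * (A r * Cc r ^ r) := by group
      _ = (A r)⁻¹ * B r * (Cc r ^ r * A r) := by rw [(Ck_comm r r (A r)).eq]
      _ = (A r)⁻¹ * (B r * Cc r ^ r) * A r := by group
      _ = B r := h1
  nth_rewrite 2 [← h2]
  group

lemma conjA_Bn (n : ℤ) : A r * B r ^ n * (A r)⁻¹ = B r ^ n * Cc r ^ (r * n) := by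
  rw [← conj_zpow, hconj, ((Cc_comm r (B r)).symm.zpow_right r).mul_zpow, ← zpow_mul]

lemma conjAinv_Bn (n : ℤ) : (A r)⁻¹ * B r ^ n * A r = B r ^ n * Cc r ^ (-(r * n)) := by
  have h0 : (A r)⁻¹ * B r ^ n * A r = (A r)⁻¹ * B r ^ n * ((A r)⁻¹)⁻¹ := by rw [inv_inv]
  rw [h0, ← conj_zpow, inv_inv, hconj', ((Cc_comm r (B r)).symm.zpow_right (-r)).mul_zpow, ← zpow_mul]
  congr 1
  ring

lemma conjAm_Bn (m n : ℤ) : A r ^ m * B r ^ n * (A r ^ m)⁻¹ = B r ^ n * Cc r ^ (r * n * m) := by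
  induction m using Int.induction_on with
  | zero => simp
  | succ m ih =>
      have e1 : A r ^ ((m : ℤ) + 1) = A r * A r ^ (m : ℤ) := by
        rw [show ((m:ℤ)+1) = 1 + (m:ℤ) by ring, zpow_add, zpow_one]
      rw [e1, mul_inv_rev]
      calc A r * A r ^ (m:ℤ) * B r ^ n * ((A r ^ (m:ℤ))⁻¹ * (A r)⁻¹)
          = A r * (A r ^ (m:ℤ) * B r ^ n * (A r ^ (m:ℤ))⁻¹) * (A r)⁻¹ := by group
        _ = A r * (B r ^ n * Cc r ^ (r * n * m)) * (A r)⁻¹ := by rw [ih]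
        _ = (A r * B r ^ n * (A r)⁻¹) * Cc r ^ (r * n * m) := by
              calc A r * (B r ^ n * Cc r ^ (r * n * m)) * (A r)⁻¹
                  = A r * B r ^ n * (Cc r ^ (r * n * m) * (A r)⁻¹) := by group
                _ = A r * B r ^ n * ((A r)⁻¹ * Cc r ^ (r * n * m)) := by
                      rw [(Ck_comm r (r * n * m) ((A r)⁻¹)).eq]
                _ = (A r * B r ^ n * (A r)⁻¹) * Cc r ^ (r * n * m) := by group
        _ = B r ^ n * Cc r ^ (r * n) * Cc r ^ (r * n * m) := by rw [conjA_Bn]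
        _ = B r ^ n * Cc r ^ (r * n * ((m:ℤ) + 1)) := by
              rw [mul_assoc, ← zpow_add]; congr 2; ring
  | pred m ih =>
      have e1 : A r ^ (-(m : ℤ) - 1) = (A r)⁻¹ * A r ^ (-(m : ℤ)) := by
        rw [show (-(m:ℤ)-1) = (-1) + (-(m:ℤ)) by ring, zpow_add, zpow_neg_one]
      rw [e1, mul_inv_rev, inv_inv]
      calc (A r)⁻¹ * A r ^ (-(m:ℤ)) * B r ^ n * ((A r ^ (-(m:ℤ)))⁻¹ * A r)
          = (A r)⁻¹ * (A r ^ (-(m:ℤ)) * B r ^ n * (A r ^ (-(m:ℤ)))⁻¹) * A r := by group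
        _ = (A r)⁻¹ * (B r ^ n * Cc r ^ (r * n * (-(m:ℤ)))) * A r := by rw [ih]
        _ = ((A r)⁻¹ * B r ^ n * A r) * Cc r ^ (r * n * (-(m:ℤ))) := by
              calc (A r)⁻¹ * (B r ^ n * Cc r ^ (r * n * (-(m:ℤ)))) * A r
                  = (A r)⁻¹ * B r ^ n * (Cc r ^ (r * n * (-(m:ℤ))) * A r) := by group
                _ = (A r)⁻¹ * B r ^ n * (A r * Cc r ^ (r * n * (-(m:ℤ)))) := by
                      rw [(Ck_comm r (r * n * (-(m:ℤ))) (A r)).eq]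
                _ = ((A r)⁻¹ * B r ^ n * A r) * Cc r ^ (r * n * (-(m:ℤ))) := by group
        _ = B r ^ n * Cc r ^ (-(r * n)) * Cc r ^ (r * n * (-(m:ℤ))) := by rw [conjAinv_Bn]
        _ = B r ^ n * Cc r ^ (r * n * (-(m:ℤ) - 1)) := by
              rw [mul_assoc, ← zpow_add]; congr 2; ring

lemma BnAm (n m : ℤ) : B r ^ n * A r ^ m = A r ^ m * (B r ^ n * Cc r ^ (-(r * n * m))) := by
  have h := conjAm_Bn r (-m) n
  calc B r ^ n * A r ^ m
      = A r ^ m * (A r ^ (-m) * B r ^ n * (A r ^ (-m))⁻¹) := by group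
    _ = A r ^ m * (B r ^ n * Cc r ^ (r * n * (-m))) := by rw [h]
    _ = A r ^ m * (B r ^ n * Cc r ^ (-(r * n * m))) := by congr 2; ring

/-- normal form -/
def nf (m n k : ℤ) : G r := A r ^ m * (B r ^ n * Cc r ^ k)

lemma nf_congr {m n k m' n' k' : ℤ} (h1 : m = m') (h2 : n = n') (h3 : k = k') :
    nf r m n k = nf r m' n' k' := by rw [h1, h2, h3]

lemma sorted_eq {e1 e2 e3 f1 f2 f3 : ℤ} (h1 : e1 = f1) (h2 : e2 = f2) (h3 : e3 = f3) :
    A r ^ e1 * (B r ^ e2 * Cc r ^ e3) = A r ^ f1 * (B r ^ f2 * Cc r ^ f3) := by rw [h1, h2, h3]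

lemma sCA (k m : ℤ) (x : G r) : Cc r ^ k * (A r ^ m * x) = A r ^ m * (Cc r ^ k * x) := by
  rw [← mul_assoc, (Ck_comm r k (A r ^ m)).eq, mul_assoc]

lemma sCAt (k m : ℤ) : Cc r ^ k * A r ^ m = A r ^ m * Cc r ^ k := (Ck_comm r k (A r ^ m)).eq

lemma sCB (k n : ℤ) (x : G r) : Cc r ^ k * (B r ^ n * x) = B r ^ n * (Cc r ^ k * x) := by
  rw [← mul_assoc, (Ck_comm r k (B r ^ n)).eq, mul_assoc]

lemma sCBt (k n : ℤ) : Cc r ^ k * B r ^ n = B r ^ n * Cc r ^ k := (Ck_comm r k (B r ^ n)).eq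

lemma sBA (n m : ℤ) (x : G r) :
    B r ^ n * (A r ^ m * x) = A r ^ m * (B r ^ n * (Cc r ^ (-(r * n * m)) * x)) := by
  rw [← mul_assoc, BnAm, mul_assoc, mul_assoc]

lemma sBAt (n m : ℤ) : B r ^ n * A r ^ m = A r ^ m * (B r ^ n * Cc r ^ (-(r * n * m))) := BnAm r n m

lemma sAA (a b : ℤ) (x : G r) : A r ^ a * (A r ^ b * x) = A r ^ (a + b) * x := by
  rw [← mul_assoc, ← zpow_add]

lemma sAAt (a b : ℤ) : A r ^ a * A r ^ b = A r ^ (a + b) := (zpow_add _ _ _).symm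

lemma sBB (a b : ℤ) (x : G r) : B r ^ a * (B r ^ b * x) = B r ^ (a + b) * x := by
  rw [← mul_assoc, ← zpow_add]

lemma sBBt (a b : ℤ) : B r ^ a * B r ^ b = B r ^ (a + b) := (zpow_add _ _ _).symm

lemma sCC (a b : ℤ) (x : G r) : Cc r ^ a * (Cc r ^ b * x) = Cc r ^ (a + b) * x := by
  rw [← mul_assoc, ← zpow_add]

lemma sCCt (a b : ℤ) : Cc r ^ a * Cc r ^ b = Cc r ^ (a + b) := (zpow_add _ _ _).symm

lemma mul_nf (m n k m' n' k' : ℤ) :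
    nf r m n k * nf r m' n' k' = nf r (m + m') (n + n') (k + k' - r * n * m') := by
  rw [nf, nf, nf]
  simp only [mul_assoc, sCA, sCAt, sCB, sCBt, sBA, sBAt, sAA, sAAt, sBB, sBBt, sCC, sCCt]
  exact sorted_eq r (by ring) (by ring) (by ring)

lemma nf_zero : nf r 0 0 0 = 1 := by simp [nf]

lemma inv_nf (m n k : ℤ) : (nf r m n k)⁻¹ = nf r (-m) (-n) (-k - r * n * m) := by
  refine inv_eq_of_mul_eq_one_right ?_
  rw [mul_nf, nf_congr r (show m + -m = 0 by ring) (show n + -n = 0 by ring)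
    (show k + (-k - r * n * m) - r * n * (-m) = 0 by ring), nf_zero]


lemma nf_c (k : ℤ) : nf r 0 0 k = Cc r ^ k := by simp [nf]

lemma zpow_nf (u v p : ℤ) : ∃ t : ℤ, (nf r u v 0) ^ p = nf r (u * p) (v * p) t := by
  induction p using Int.induction_on with
  | zero => exact ⟨0, by rw [zpow_zero, ← nf_zero r]; exact nf_congr r (by ring) (by ring) rfl⟩
  | succ p ih =>
      obtain ⟨t, ht⟩ := ih
      refine ⟨t + 0 - r * (v * p) * u, ?_⟩
      rw [zpow_add_one, ht, mul_nf]
      exact nf_congr r (by ring) (by ring) (by ring)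
  | pred p ih =>
      obtain ⟨t, ht⟩ := ih
      refine ⟨t + (-0 - r * v * u) - r * (v * (-p)) * (-u), ?_⟩
      rw [zpow_sub_one, ht, inv_nf, mul_nf]
      exact nf_congr r (by ring) (by ring) (by ring)

lemma nf_comm_calc (m n k m' n' k' : ℤ) :
    nf r m n k * nf r m' n' k' * (nf r m n k)⁻¹ * (nf r m' n' k')⁻¹ =
      nf r 0 0 (r * (n' * m - n * m')) := by
  rw [inv_nf, inv_nf, mul_nf, mul_nf, mul_nf]
  exact nf_congr r (by ring) (by ring) (by ring)

/-- the images of the generators under the endomorphism `φ` -/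
def fgen : Fin 3 → G r := ![nf r 2 1 0, nf r 5 2 0, nf r 0 0 (-1)]

/-- the images of the generators under the inverse endomorphism `ψ` -/
def ggen : Fin 3 → G r := ![nf r (-2) 1 (4 * r), nf r 5 (-2) 0, nf r 0 0 (-1)]

lemma fgen_rels : ∀ w ∈ NrRels r, FreeGroup.lift (fgen r) w = 1 := by
  rintro w (rfl | rfl | rfl)
  · rw [commutatorElement_def]
    simp only [map_mul, map_inv, FreeGroup.lift_apply_of]
    show fgen r 0 * fgen r 2 * (fgen r 0)⁻¹ * (fgen r 2)⁻¹ = 1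
    rw [show fgen r 0 = nf r 2 1 0 from rfl, show fgen r 2 = nf r 0 0 (-1) from rfl,
      nf_comm_calc, nf_congr r rfl rfl (show r * (0 * 2 - 1 * 0) = 0 by ring), nf_zero]
  · rw [commutatorElement_def]
    simp only [map_mul, map_inv, FreeGroup.lift_apply_of]
    show fgen r 1 * fgen r 2 * (fgen r 1)⁻¹ * (fgen r 2)⁻¹ = 1
    rw [show fgen r 1 = nf r 5 2 0 from rfl, show fgen r 2 = nf r 0 0 (-1) from rfl,
      nf_comm_calc, nf_congr r rfl rfl (show r * (0 * 5 - 2 * 0) = 0 by ring), nf_zero]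
  · rw [map_mul, map_zpow, commutatorElement_def]
    simp only [map_mul, map_inv, FreeGroup.lift_apply_of]
    show fgen r 0 * fgen r 1 * (fgen r 0)⁻¹ * (fgen r 1)⁻¹ * (fgen r 2) ^ (-r) = 1
    rw [show fgen r 0 = nf r 2 1 0 from rfl, show fgen r 1 = nf r 5 2 0 from rfl,
      show fgen r 2 = nf r 0 0 (-1) from rfl, nf_comm_calc, nf_c, nf_c, ← zpow_mul, ← zpow_add,
      show r * (2 * 2 - 1 * 5) + -1 * -r = 0 by ring, zpow_zero]

lemma ggen_rels : ∀ w ∈ NrRels r, FreeGroup.lift (ggen r) w = 1 := by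
  rintro w (rfl | rfl | rfl)
  · rw [commutatorElement_def]
    simp only [map_mul, map_inv, FreeGroup.lift_apply_of]
    show ggen r 0 * ggen r 2 * (ggen r 0)⁻¹ * (ggen r 2)⁻¹ = 1
    rw [show ggen r 0 = nf r (-2) 1 (4*r) from rfl, show ggen r 2 = nf r 0 0 (-1) from rfl,
      nf_comm_calc, nf_congr r rfl rfl (show r * (0 * (-2) - 1 * 0) = 0 by ring), nf_zero]
  · rw [commutatorElement_def]
    simp only [map_mul, map_inv, FreeGroup.lift_apply_of]
    show ggen r 1 * ggen r 2 * (ggen r 1)⁻¹ * (ggen r 2)⁻¹ = 1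
    rw [show ggen r 1 = nf r 5 (-2) 0 from rfl, show ggen r 2 = nf r 0 0 (-1) from rfl,
      nf_comm_calc, nf_congr r rfl rfl (show r * (0 * 5 - (-2) * 0) = 0 by ring), nf_zero]
  · rw [map_mul, map_zpow, commutatorElement_def]
    simp only [map_mul, map_inv, FreeGroup.lift_apply_of]
    show ggen r 0 * ggen r 1 * (ggen r 0)⁻¹ * (ggen r 1)⁻¹ * (ggen r 2) ^ (-r) = 1
    rw [show ggen r 0 = nf r (-2) 1 (4*r) from rfl, show ggen r 1 = nf r 5 (-2) 0 from rfl,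
      show ggen r 2 = nf r 0 0 (-1) from rfl, nf_comm_calc, nf_c, nf_c, ← zpow_mul, ← zpow_add,
      show r * ((-2) * (-2) - 1 * 5) + -1 * -r = 0 by ring, zpow_zero]

/-- the endomorphism `φ` -/
def φh : G r →* G r := PresentedGroup.toGroup (fgen_rels r)

/-- the endomorphism `ψ` (inverse of `φ`) -/
def ψh : G r →* G r := PresentedGroup.toGroup (ggen_rels r)

lemma φh_of0 : φh r (PresentedGroup.of 0) = nf r 2 1 0 := PresentedGroup.toGroup.of _
lemma φh_of1 : φh r (PresentedGroup.of 1) = nf r 5 2 0 := PresentedGroup.toGroup.of _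
lemma φh_of2 : φh r (PresentedGroup.of 2) = nf r 0 0 (-1) := PresentedGroup.toGroup.of _
lemma ψh_of0 : ψh r (PresentedGroup.of 0) = nf r (-2) 1 (4*r) := PresentedGroup.toGroup.of _
lemma ψh_of1 : ψh r (PresentedGroup.of 1) = nf r 5 (-2) 0 := PresentedGroup.toGroup.of _
lemma ψh_of2 : ψh r (PresentedGroup.of 2) = nf r 0 0 (-1) := PresentedGroup.toGroup.of _

lemma map_nf (θ : G r →* G r) (m n k : ℤ) :
    θ (nf r m n k) = θ (PresentedGroup.of 0) ^ m * (θ (PresentedGroup.of 1) ^ n *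
      θ (PresentedGroup.of 2) ^ k) := by
  simp only [nf, map_mul, map_zpow]
  rfl

lemma zpow_two' {H : Type*} [Group H] (a : H) : a ^ (2:ℤ) = a * a := by
  rw [show (2:ℤ) = 1 + 1 from rfl, zpow_add, zpow_one]

lemma zpow_five' {H : Type*} [Group H] (a : H) : a ^ (5:ℤ) = a * (a * (a * (a * a))) := by
  rw [show (5:ℤ) = 1 + (1 + (1 + (1 + 1))) from rfl, zpow_add, zpow_add, zpow_add, zpow_add,
    zpow_one]

lemma nf_sq (m n k : ℤ) : nf r m n k ^ (2:ℤ) = nf r (2*m) (2*n) (2*k - r*n*m) := by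
  rw [zpow_two', mul_nf]; exact nf_congr r (by ring) (by ring) (by ring)

lemma nf_five (m n k : ℤ) : nf r m n k ^ (5:ℤ) = nf r (5*m) (5*n) (5*k - 10*r*n*m) := by
  rw [zpow_five', mul_nf, mul_nf, mul_nf, mul_nf]
  exact nf_congr r (by ring) (by ring) (by ring)

lemma nf_c_pow (k p : ℤ) : nf r 0 0 k ^ p = nf r 0 0 (k * p) := by
  rw [nf_c, ← zpow_mul, nf_c]

lemma nf_of0 : nf r 1 0 0 = PresentedGroup.of 0 := by
  rw [nf, zpow_one, zpow_zero, zpow_zero, one_mul, mul_one]; rfl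

lemma nf_of1 : nf r 0 1 0 = PresentedGroup.of 1 := by
  rw [nf, zpow_one, zpow_zero, zpow_zero, one_mul, mul_one]; rfl

lemma nf_of2 : nf r 0 0 1 = PresentedGroup.of 2 := by
  rw [nf, zpow_one, zpow_zero, zpow_zero, one_mul, one_mul]; rfl

lemma ψφ_id : (ψh r).comp (φh r) = MonoidHom.id (G r) := by
  apply PresentedGroup.ext
  intro i
  fin_cases i
  · show ψh r (φh r (PresentedGroup.of 0)) = PresentedGroup.of 0
    rw [φh_of0, map_nf, ψh_of0, ψh_of1, ψh_of2, nf_sq, zpow_one, nf_c_pow, mul_nf, mul_nf]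
    refine Eq.trans (nf_congr r ?_ ?_ ?_) (nf_of0 r) <;> ring
  · show ψh r (φh r (PresentedGroup.of 1)) = PresentedGroup.of 1
    rw [φh_of1, map_nf, ψh_of0, ψh_of1, ψh_of2, nf_five, nf_sq, nf_c_pow, mul_nf, mul_nf]
    refine Eq.trans (nf_congr r ?_ ?_ ?_) (nf_of1 r) <;> ring
  · show ψh r (φh r (PresentedGroup.of 2)) = PresentedGroup.of 2
    rw [φh_of2, map_nf, ψh_of0, ψh_of1, ψh_of2, nf_c_pow]
    rw [zpow_zero, zpow_zero, one_mul, one_mul]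
    refine Eq.trans (nf_congr r ?_ ?_ ?_) (nf_of2 r) <;> ring

lemma φψ_id : (φh r).comp (ψh r) = MonoidHom.id (G r) := by
  apply PresentedGroup.ext
  intro i
  fin_cases i
  · show φh r (ψh r (PresentedGroup.of 0)) = PresentedGroup.of 0
    rw [ψh_of0, map_nf, φh_of0, φh_of1, φh_of2, zpow_one, nf_c_pow]
    rw [show (nf r 2 1 0) ^ (-2:ℤ) = ((nf r 2 1 0) ^ (2:ℤ))⁻¹ by
      rw [← zpow_neg], nf_sq, inv_nf, mul_nf, mul_nf]
    refine Eq.trans (nf_congr r ?_ ?_ ?_) (nf_of0 r) <;> ring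
  · show φh r (ψh r (PresentedGroup.of 1)) = PresentedGroup.of 1
    rw [ψh_of1, map_nf, φh_of0, φh_of1, φh_of2, nf_five, nf_c_pow]
    rw [show (nf r 5 2 0) ^ (-2:ℤ) = ((nf r 5 2 0) ^ (2:ℤ))⁻¹ by
      rw [← zpow_neg], nf_sq, inv_nf, mul_nf, mul_nf]
    refine Eq.trans (nf_congr r ?_ ?_ ?_) (nf_of1 r) <;> ring
  · show φh r (ψh r (PresentedGroup.of 2)) = PresentedGroup.of 2
    rw [ψh_of2, map_nf, φh_of0, φh_of1, φh_of2, nf_c_pow]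
    rw [zpow_zero, zpow_zero, one_mul, one_mul]
    refine Eq.trans (nf_congr r ?_ ?_ ?_) (nf_of2 r) <;> ring

/-- the automorphism `φ` -/
def φe : MulAut (G r) := MonoidHom.toMulEquiv (φh r) (ψh r) (ψφ_id r) (φψ_id r)


lemma exists_nf (g : G r) : ∃ m n k : ℤ, g = nf r m n k := by
  let S : Subgroup (G r) :=
    { carrier := {g | ∃ m n k : ℤ, g = nf r m n k}
      mul_mem' := by
        rintro x y ⟨m, n, k, rfl⟩ ⟨m', n', k', rfl⟩
        exact ⟨m + m', n + n', k + k' - r * n * m', mul_nf r m n k m' n' k'⟩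
      one_mem' := ⟨0, 0, 0, (nf_zero r).symm⟩
      inv_mem' := by
        rintro x ⟨m, n, k, rfl⟩
        exact ⟨-m, -n, -k - r * n * m, inv_nf r m n k⟩ }
  have hg : g ∈ S := by
    refine PresentedGroup.generated_by (NrRels r) S (fun j => ?_) g
    fin_cases j
    · exact ⟨1, 0, 0, (nf_of0 r).symm⟩
    · exact ⟨0, 1, 0, (nf_of1 r).symm⟩
    · exact ⟨0, 0, 1, (nf_of2 r).symm⟩
  exact hg

lemma φe_apply (x : G r) : (φe r).toMonoidHom x = φh r x := rfl

lemma tc_calc (p q s m n k t1 t2 : ℤ)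
    (h1 : (nf r 2 1 0) ^ p = nf r (2 * p) (1 * p) t1)
    (h2 : (nf r 5 2 0) ^ q = nf r (5 * q) (2 * q) t2) :
    nf r p q s * nf r m n k * (φh r (nf r p q s))⁻¹ =
      nf r (m - p - 5 * q) (n - p - q)
        (2 * s + k - r * q * m - t1 - t2 + 5 * r * p * q + r * (2 * p + 5 * q) * (n - p - q)) := by
  rw [map_nf, φh_of0, φh_of1, φh_of2, h1, h2, nf_c_pow]
  simp only [mul_nf]
  rw [inv_nf]
  simp only [mul_nf]
  exact nf_congr r (by ring) (by ring) (by ring)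

lemma reduce (m n k : ℤ) : ∃ i j : ℤ, 0 ≤ i ∧ i < 4 ∧ 0 ≤ j ∧ j < 2 ∧
    twistedConj (φe r).toMonoidHom (nf r m n k) (nf r i 0 j) := by
  set q : ℤ := (m - n) / 4 with hq
  set p : ℤ := n - q with hp
  obtain ⟨t1, ht1⟩ := zpow_nf r 2 1 p
  obtain ⟨t2, ht2⟩ := zpow_nf r 5 2 q
  set R : ℤ := k - r * q * m - t1 - t2 + 5 * r * p * q + r * (2 * p + 5 * q) * (n - p - q)
    with hR
  set s : ℤ := -(R / 2) with hs
  refine ⟨(m - n) % 4, R % 2, Int.emod_nonneg _ (by norm_num), Int.emod_lt_of_pos _ (by norm_num),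
    Int.emod_nonneg _ (by norm_num), Int.emod_lt_of_pos _ (by norm_num), ?_⟩
  refine ⟨nf r p q s, ?_⟩
  rw [φe_apply, tc_calc r p q s m n k t1 t2 ht1 ht2]
  refine nf_congr r ?_ ?_ ?_
  · omega
  · omega
  · have hE : 2 * s + k - r * q * m - t1 - t2 + 5 * r * p * q +
        r * (2 * p + 5 * q) * (n - p - q) = 2 * s + R := by rw [hR]; ring
    rw [hE]
    omega

lemma finite_quot : Finite (Quot (twistedConj (φe r).toMonoidHom)) := by
  have hsurj : Function.Surjective (fun x : Fin 4 × Fin 2 =>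
      Quot.mk (twistedConj (φe r).toMonoidHom) (nf r (x.1.1 : ℤ) 0 (x.2.1 : ℤ))) := by
    intro y
    induction y using Quot.ind with
    | _ g =>
      obtain ⟨m, n, k, rfl⟩ := exists_nf r g
      obtain ⟨i, j, hi0, hi4, hj0, hj2, htc⟩ := reduce r m n k
      refine ⟨(⟨i.toNat, by omega⟩, ⟨j.toNat, by omega⟩), ?_⟩
      have e1 : ((i.toNat : ℕ) : ℤ) = i := Int.toNat_of_nonneg hi0
      have e2 : ((j.toNat : ℕ) : ℤ) = j := Int.toNat_of_nonneg hj0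
      show Quot.mk _ (nf r ((i.toNat : ℕ) : ℤ) 0 ((j.toNat : ℕ) : ℤ)) = _
      rw [e1, e2]
      exact (Quot.sound htc).symm
  exact Finite.of_surjective _ hsurj


lemma nf_def (m n k : ℤ) : nf r m n k = A r ^ m * (B r ^ n * Cc r ^ k) := rfl

end Stmt19


/-- For `r ≠ 0`, the torsion-free nilpotent group `N_r` of Hirsch length 3 admits an
automorphism `a ↦ a²b`, `b ↦ a⁵b²` with finite Reidemeister number; hence `N_r`
does not have the `R_∞` property. -/
theorem stmt19 (r : ℤ) (hr : r ≠ 0) :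
    ∃ φ : MulAut (PresentedGroup (NrRels r)),
      φ (PresentedGroup.of 0) = PresentedGroup.of 0 ^ 2 * PresentedGroup.of 1 ∧
      φ (PresentedGroup.of 1) = PresentedGroup.of 0 ^ 5 * PresentedGroup.of 1 ^ 2 ∧
      Finite (Quot (twistedConj φ.toMonoidHom)) := by
  refine ⟨Stmt19.φe r, ?_, ?_, Stmt19.finite_quot r⟩
  · show Stmt19.φh r (PresentedGroup.of 0) = _
    rw [Stmt19.φh_of0, Stmt19.nf_def]
    rw [zpow_one, zpow_zero, mul_one, show (2:ℤ) = ((2:ℕ):ℤ) from rfl, zpow_natCast]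
    rfl
  · show Stmt19.φh r (PresentedGroup.of 1) = _
    rw [Stmt19.φh_of1, Stmt19.nf_def]
    rw [zpow_zero, mul_one, show (5:ℤ) = ((5:ℕ):ℤ) from rfl, show (2:ℤ) = ((2:ℕ):ℤ) from rfl,
      zpow_natCast, zpow_natCast]
    rfl
end
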